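/- arXiv:2504.03326 — 3 statements merged into one kernel-verified Lean document; each statement's English description precedes it below -/
import Mathlib

section
/- Let c^1 be the BDM rates with parameter vector (φ^1, φ_A^1, μ^1, λ^1, N, N_A, M) and c^2 the BDM rates with parameter vector (φ^2, φ_A^2, μ^2, λ^2, N, N_A, M), and set λ^i_{k0}(r) = μ^i_k(r)/(2d) for 1 ≤ k ≤ M, i = 1, 2. Assume that for all r, s ∈ W^{2d} with r ≤ s componentwise: (a) φ^1(r) ≥ φ^2(s) and φ_A^1(r) ≥ φ_A^2(s); (b) ∑_{i=1}^m λ^1_{ij}(r) ≤ ∑_{i=1}^m λ^2_{ik}(s) for all m, k, j with 1 ≤ m ≤ M and 1 ≤ k ≤ j ≤ N; (c) ∑_{j=0}^n λ^1_{ij}(r) ≥ ∑_{j=0}^n λ^2_{lj}(s) for all n, i, l with 0 ≤ n ≤ N and 1 ≤ i ≤ l ≤ M. Then for every site x ∈ ℤ^d and all configurations η, ξ ∈ Ω with η ≤ ξ, conditions (C1) and (C2) hold, where c^1_a is the BDM rate of the change a from η under the first parameter vector and c^2_b is the BDM rate of the change b from ξ under the second parameter vector. -/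
open scoped ENNReal

namespace IPS

/-- A change is identified with the function `δ : S → ℤ` that it adds (coordinatewise)
to a configuration.  `ChangeSet nbr x` is the set of changes involving site `x`:
add or subtract `k ≥ 1` individuals at `x`, or add `k` at `x` while subtracting `l ≥ 1`
at a neighbour `y` of `x` (or vice versa).  Note that with this encoding the maps
`σ_{xy}^{-k,l}` and `σ_{yx}^{+l,k}` automatically coincide. -/
def ChangeSet {S : Type*} [DecidableEq S] (nbr : S → S → Prop) (x : S) : Set (S → ℤ) :=
  {δ | (∃ k : ℤ, 0 < k ∧ (δ = Pi.single x k ∨ δ = Pi.single x (-k))) ∨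
       (∃ y, nbr x y ∧ ∃ k l : ℤ, 0 < k ∧ 0 < l ∧
          (δ = Pi.single x k + Pi.single y (-l) ∨ δ = Pi.single x (-k) + Pi.single y l))}

/-- The configuration resulting from applying change `δ` to `ζ`. -/
def app {S : Type*} (ζ δ : S → ℤ) : S → ℤ := ζ + δ

/-- `δ` is applicable to `ζ` if the resulting configuration stays in `W^S`. -/
def Applicable {S : Type*} (W : Set ℤ) (ζ δ : S → ℤ) : Prop := ∀ z, ζ z + δ z ∈ W

variable {S : Type*} [DecidableEq S]

def R1 (W : Set ℤ) (nbr : S → S → Prop) (x : S) (η ξ : S → ℤ) : Set (S → ℤ) :=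
  {a | a ∈ ChangeSet nbr x ∧ Applicable W η a ∧ ξ x < app η a x}

def S1 (W : Set ℤ) (nbr : S → S → Prop) (x : S) (η : S → ℤ) : Set (S → ℤ) :=
  {a | a ∈ ChangeSet nbr x ∧ Applicable W η a ∧ app η a x < η x}

def T1 (W : Set ℤ) (nbr : S → S → Prop) (x : S) (η ξ : S → ℤ) : Set (S → ℤ) :=
  S1 W nbr x η ∪ R1 W nbr x η ξ

def R2 (W : Set ℤ) (nbr : S → S → Prop) (x : S) (η ξ : S → ℤ) : Set (S → ℤ) :=
  {b | b ∈ ChangeSet nbr x ∧ Applicable W ξ b ∧ app ξ b x < η x}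

def S2 (W : Set ℤ) (nbr : S → S → Prop) (x : S) (ξ : S → ℤ) : Set (S → ℤ) :=
  {b | b ∈ ChangeSet nbr x ∧ Applicable W ξ b ∧ ξ x < app ξ b x}

def T2 (W : Set ℤ) (nbr : S → S → Prop) (x : S) (η ξ : S → ℤ) : Set (S → ℤ) :=
  S2 W nbr x ξ ∪ R2 W nbr x η ξ

/-- `f` is a solution to the flow problem `P^x`: it is supported on pairs
`(b, a) ∈ T_2^x × T_1^x` with `η_a ≤ ξ_b`, its column sums equal `c¹_a` on `R_1^x`
and are at most `c¹_a` on `S_1^x`, and its row sums equal `c²_b` on `R_2^x` and are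
at most `c²_b` on `S_2^x`. -/
structure IsSolution (W : Set ℤ) (nbr : S → S → Prop) (x : S) (η ξ : S → ℤ)
    (c1 c2 : (S → ℤ) → ℝ≥0∞) (f : (S → ℤ) → (S → ℤ) → ℝ≥0∞) : Prop where
  domain : ∀ b a, f b a ≠ 0 → b ∈ T2 W nbr x η ξ ∧ a ∈ T1 W nbr x η ξ
  order : ∀ b a, f b a ≠ 0 → app η a ≤ app ξ b
  eq_R1 : ∀ a ∈ R1 W nbr x η ξ, ∑' b : T2 W nbr x η ξ, f b.1 a = c1 a
  le_S1 : ∀ a ∈ S1 W nbr x η, ∑' b : T2 W nbr x η ξ, f b.1 a ≤ c1 a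
  eq_R2 : ∀ b ∈ R2 W nbr x η ξ, ∑' a : T1 W nbr x η ξ, f b a.1 = c2 b
  le_S2 : ∀ b ∈ S2 W nbr x ξ, ∑' a : T1 W nbr x η ξ, f b a.1 ≤ c2 b

/-- `D_1^↑`. -/
def upArrow (W : Set ℤ) (nbr : S → S → Prop) (x : S) (η ξ : S → ℤ)
    (D : Set (S → ℤ)) : Set (S → ℤ) :=
  {b | b ∈ ChangeSet nbr x ∧ Applicable W ξ b ∧ ∃ a ∈ D, app η a ≤ app ξ b}

/-- `D_2^↓`. -/
def downArrow (W : Set ℤ) (nbr : S → S → Prop) (x : S) (η ξ : S → ℤ)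
    (D : Set (S → ℤ)) : Set (S → ℤ) :=
  {a | a ∈ ChangeSet nbr x ∧ Applicable W η a ∧ ∃ b ∈ D, app η a ≤ app ξ b}

/-- Condition (C1). -/
def CondC1 (W : Set ℤ) (nbr : S → S → Prop) (x : S) (η ξ : S → ℤ)
    (c1 c2 : (S → ℤ) → ℝ≥0∞) : Prop :=
  ∀ D1 ⊆ R1 W nbr x η ξ, ∑' a : D1, c1 a.1 ≤ ∑' b : upArrow W nbr x η ξ D1, c2 b.1

/-- Condition (C2). -/
def CondC2 (W : Set ℤ) (nbr : S → S → Prop) (x : S) (η ξ : S → ℤ)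
    (c1 c2 : (S → ℤ) → ℝ≥0∞) : Prop :=
  ∀ D2 ⊆ R2 W nbr x η ξ, ∑' b : D2, c2 b.1 ≤ ∑' a : downArrow W nbr x η ξ D2, c1 a.1

/-- `C^{+x}` for the configuration `ζ`. -/
def Cplus (W : Set ℤ) (nbr : S → S → Prop) (x : S) (ζ : S → ℤ) : Set (S → ℤ) :=
  {a | a ∈ ChangeSet nbr x ∧ Applicable W ζ a ∧ ζ x < app ζ a x ∧ ∀ z, z ≠ x → app ζ a z = ζ z}

/-- `C^{-x}` for the configuration `ζ`. -/
def Cminus (W : Set ℤ) (nbr : S → S → Prop) (x : S) (ζ : S → ℤ) : Set (S → ℤ) :=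
  {a | a ∈ ChangeSet nbr x ∧ Applicable W ζ a ∧ app ζ a x < ζ x ∧ ∀ z, z ≠ x → app ζ a z = ζ z}

/-- `C^{+xy}` for the configuration `ζ`. -/
def CplusPair (W : Set ℤ) (nbr : S → S → Prop) (x : S) (ζ : S → ℤ) (y : S) : Set (S → ℤ) :=
  {a | a ∈ ChangeSet nbr x ∧ Applicable W ζ a ∧ ζ x < app ζ a x ∧ app ζ a y < ζ y}

/-- `C^{-xy}` for the configuration `ζ`. -/
def CminusPair (W : Set ℤ) (nbr : S → S → Prop) (x : S) (ζ : S → ℤ) (y : S) : Set (S → ℤ) :=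
  {a | a ∈ ChangeSet nbr x ∧ Applicable W ζ a ∧ app ζ a x < ζ x ∧ ζ y < app ζ a y}

/-- `C^{+x•}` for the configuration `ζ`. -/
def CplusBull (W : Set ℤ) (nbr : S → S → Prop) (x : S) (ζ : S → ℤ) : Set (S → ℤ) :=
  {a | ∃ y, nbr x y ∧ a ∈ CplusPair W nbr x ζ y}

/-- `C^{-x•}` for the configuration `ζ`. -/
def CminusBull (W : Set ℤ) (nbr : S → S → Prop) (x : S) (ζ : S → ℤ) : Set (S → ℤ) :=
  {a | ∃ y, nbr x y ∧ a ∈ CminusPair W nbr x ζ y}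

/-- `G_1^e`: the changes of `C` (for the first process) that preserve the order. -/
def G1 (η ξ : S → ℤ) (C : Set (S → ℤ)) : Set (S → ℤ) := {a | a ∈ C ∧ app η a ≤ ξ}

/-- `B_1^e`: the changes of `C` (for the first process) that break the order. -/
def B1 (η ξ : S → ℤ) (C : Set (S → ℤ)) : Set (S → ℤ) := {a | a ∈ C ∧ ¬ app η a ≤ ξ}

/-- `G_2^e`: the changes of `C` (for the second process) that preserve the order. -/
def G2 (η ξ : S → ℤ) (C : Set (S → ℤ)) : Set (S → ℤ) := {b | b ∈ C ∧ η ≤ app ξ b}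

/-- `B_2^e`: the changes of `C` (for the second process) that break the order. -/
def B2 (η ξ : S → ℤ) (C : Set (S → ℤ)) : Set (S → ℤ) := {b | b ∈ C ∧ ¬ η ≤ app ξ b}


/-- Neighbour relation on `ℤ^d`: `‖x − y‖₁ = 1`. -/
def nbrZ (d : ℕ) (x y : Fin d → ℤ) : Prop := (∑ i, |x i - y i|) = 1

/-- The restriction of the configuration `ζ` to the `2d` nearest neighbours of `x`,
indexed by the coordinate direction and the sign of the shift. -/
def profile {d : ℕ} (ζ : (Fin d → ℤ) → ℤ) (x : Fin d → ℤ) : Fin d × Bool → ℤ :=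
  fun j => ζ (fun i => x i + if i = j.1 then (if j.2 then 1 else -1) else 0)

/-- `c` is the rate function of the BDM model with parameter vector
`(φ, φA, μ, lam, N, NA, M)`:  `c ζ δ` is the rate of the change `δ` from the
configuration `ζ`.  Births of one individual occur at rate `ζ(x)·1{ζ(x)<N}`; deaths of
one individual at rate `ζ(x)(φA(r)1{ζ(x)≤NA} + φ(r)1{ζ(x)>NA}) + μ₁(r)1{ζ(x)>N−M}`;
catastrophic deaths of `k ≥ 2` individuals at rate `μ_k(r)1{ζ(x)−k ≥ N−M}`; migrations
`(ζ(x), ζ(y)) → (ζ(x)−k, ζ(y)+l)` at rate `λ_{kl}(r)1{ζ(x)−k ≥ N−M, ζ(y)+l ≤ N}`;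
all other changes have rate `0`.  Here `r` is the profile of `ζ` at the neighbours of
the site where the change originates. -/
def IsBDMRate (d N NA M : ℕ)
    (φ φA : ((Fin d × Bool) → ℤ) → ℝ≥0∞)
    (μ : ℕ → ((Fin d × Bool) → ℤ) → ℝ≥0∞)
    (lam : ℕ → ℕ → ((Fin d × Bool) → ℤ) → ℝ≥0∞)
    (c : ((Fin d → ℤ) → ℤ) → ((Fin d → ℤ) → ℤ) → ℝ≥0∞) : Prop :=
  (∀ ζ x, c ζ (Pi.single x 1) = if ζ x < N then ((ζ x).toNat : ℝ≥0∞) else 0) ∧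
  (∀ ζ x, c ζ (Pi.single x (-1)) =
      ((ζ x).toNat : ℝ≥0∞) * (if ζ x ≤ NA then φA (profile ζ x) else φ (profile ζ x)) +
        (if (N : ℤ) - M < ζ x then μ 1 (profile ζ x) else 0)) ∧
  (∀ ζ x k, 2 ≤ k → k ≤ M →
      c ζ (Pi.single x (-(k : ℤ))) =
        if (N : ℤ) - M ≤ ζ x - k then μ k (profile ζ x) else 0) ∧
  (∀ ζ x y k l, nbrZ d x y → 1 ≤ k → k ≤ M → 1 ≤ l → l ≤ N →
      c ζ (Pi.single x (-(k : ℤ)) + Pi.single y (l : ℤ)) =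
        if (N : ℤ) - M ≤ ζ x - k ∧ ζ y + l ≤ N then lam k l (profile ζ x) else 0) ∧
  (∀ ζ δ, c ζ δ ≠ 0 →
      (∃ x, δ = Pi.single x 1) ∨
      (∃ x k, 1 ≤ k ∧ k ≤ M ∧ δ = Pi.single x (-(k : ℤ))) ∨
      (∃ x y k l, nbrZ d x y ∧ 1 ≤ k ∧ k ≤ M ∧ 1 ≤ l ∧ l ≤ N ∧
        δ = Pi.single x (-(k : ℤ)) + Pi.single y (l : ℤ)))


namespace Aux

variable {d : ℕ}

def nb (x : Fin d → ℤ) (j : Fin d × Bool) : Fin d → ℤ :=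
  fun i => x i + if i = j.1 then (if j.2 then 1 else -1) else 0

lemma profile_eq (ζ : (Fin d → ℤ) → ℤ) (x : Fin d → ℤ) (j) : profile ζ x j = ζ (nb x j) := rfl

lemma nb_apply_self (x : Fin d → ℤ) (j) : nb x j j.1 = x j.1 + (if j.2 then 1 else -1) := by
  simp [nb]

lemma nb_apply_ne (x : Fin d → ℤ) (j) {i} (h : i ≠ j.1) : nb x j i = x i := by
  simp [nb, h]

lemma nbrZ_nb (x : Fin d → ℤ) (j) : nbrZ d x (nb x j) := by
  unfold nbrZ
  have : ∀ i, |x i - nb x j i| = if i = j.1 then 1 else 0 := by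
    intro i
    by_cases h : i = j.1
    · subst h; rw [nb_apply_self]; cases j.2 <;> simp
    · rw [nb_apply_ne _ _ h]; simp [h]
  simp [this]

lemma nbrZ_symm {x y : Fin d → ℤ} (h : nbrZ d x y) : nbrZ d y x := by
  unfold nbrZ at *
  simpa [abs_sub_comm] using h

lemma nbrZ_ne {x y : Fin d → ℤ} (h : nbrZ d x y) : x ≠ y := by
  rintro rfl
  simp [nbrZ] at h

lemma nb_ne (x : Fin d → ℤ) (j) : nb x j ≠ x :=
  fun h => nbrZ_ne (nbrZ_nb x j) h.symm

lemma nb_injective (x : Fin d → ℤ) : Function.Injective (nb x) := by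
  intro j j' h
  have h1 := congrFun h j.1
  have h2 := congrFun h j'.1
  by_cases hjj : j.1 = j'.1
  · have : j.2 = j'.2 := by
      rw [nb_apply_self] at h1
      rw [show nb x j' j.1 = x j.1 + (if j'.2 then 1 else -1) by simp [nb, hjj]] at h1
      cases hj2 : j.2 <;> cases hj2' : j'.2 <;> simp [hj2, hj2'] at h1 ⊢ <;> omega
    exact Prod.ext hjj this
  · exfalso
    rw [nb_apply_self] at h1
    rw [nb_apply_ne x j' hjj] at h1
    cases j.2 <;> simp at h1 <;> omega

lemma exists_nb {x y : Fin d → ℤ} (h : nbrZ d x y) : ∃ j, y = nb x j := by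
  unfold nbrZ at h
  have hex : ∃ i₀, |x i₀ - y i₀| ≠ 0 := by
    by_contra hc
    push_neg at hc
    simp [hc] at h
  obtain ⟨i₀, hi₀⟩ := hex
  have habs : ∀ i, 0 ≤ |x i - y i| := fun i => abs_nonneg _
  have h1 : |x i₀ - y i₀| = 1 ∧ ∀ i ≠ i₀, |x i - y i| = 0 := by
    have hsingle := Finset.single_le_sum (f := fun i => |x i - y i|) (fun i _ => habs i)
      (Finset.mem_univ i₀)
    rw [h] at hsingle
    have hone : |x i₀ - y i₀| = 1 := le_antisymm hsingle (by have := habs i₀; omega)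
    refine ⟨hone, fun i hi => ?_⟩
    have herase := Finset.add_sum_erase _ (fun i => |x i - y i|) (Finset.mem_univ i₀)
    have h4 : i ∈ Finset.univ.erase i₀ := Finset.mem_erase.2 ⟨hi, Finset.mem_univ i⟩
    have h5 := Finset.single_le_sum (f := fun i => |x i - y i|)
      (fun i _ => habs i) h4
    rw [h] at herase
    have := habs i
    omega
  have hh := h1.1
  rcases (abs_eq (by norm_num : (0:ℤ) ≤ 1)).mp hh with h' | h'
  · refine ⟨⟨i₀, false⟩, funext fun i => ?_⟩
    by_cases hi : i = i₀
    · subst hi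
      simp only [nb]
      simp
      omega
    · have h0 := abs_eq_zero.mp (h1.2 i hi)
      simp only [nb]
      simp [hi]
      omega
  · refine ⟨⟨i₀, true⟩, funext fun i => ?_⟩
    by_cases hi : i = i₀
    · subst hi
      simp only [nb]
      simp
      omega
    · have h0 := abs_eq_zero.mp (h1.2 i hi)
      simp only [nb]
      simp [hi]
      omega


variable {S : Type*} [DecidableEq S]

/-- migration: remove `k` at `u`, add `l` at `v`. -/
def mig (u v : S) (k l : ℕ) : S → ℤ := Pi.single u (-(k:ℤ)) + Pi.single v (l:ℤ)

def dth (x : S) (k : ℕ) : S → ℤ := Pi.single x (-(k:ℤ))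

def br (x : S) : S → ℤ := Pi.single x 1

lemma mig_apply_left {u v : S} (h : u ≠ v) (k l : ℕ) : mig u v k l u = -(k:ℤ) := by
  simp [mig, Pi.single_eq_of_ne h]

lemma mig_apply_right {u v : S} (h : u ≠ v) (k l : ℕ) : mig u v k l v = (l:ℤ) := by
  simp [mig, Pi.single_eq_of_ne h.symm]

lemma mig_apply_other {u v z : S} (hu : z ≠ u) (hv : z ≠ v) (k l : ℕ) : mig u v k l z = 0 := by
  simp [mig, Pi.single_eq_of_ne hu, Pi.single_eq_of_ne hv]

lemma br_apply_self (x : S) : br x x = 1 := by simp [br]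
lemma br_apply_ne {x z : S} (h : z ≠ x) : br x z = 0 := by simp [br, Pi.single_eq_of_ne h]
lemma dth_apply_self (x : S) (k : ℕ) : dth x k x = -(k:ℤ) := by simp [dth]
lemma dth_apply_ne {x z : S} (h : z ≠ x) (k : ℕ) : dth x k z = 0 := by
  simp [dth, Pi.single_eq_of_ne h]

lemma br_nonneg (x z : S) : 0 ≤ br x z := by
  rcases eq_or_ne z x with rfl | h
  · simp [br_apply_self]
  · simp [br_apply_ne h]

/-- disambiguation: mig = mig -/
lemma mig_inj {u v u' v' : S} {k l k' l' : ℕ} (huv : u ≠ v) (huv' : u' ≠ v')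
    (hk : 1 ≤ k) (hl : 1 ≤ l) (hk' : 1 ≤ k') (hl' : 1 ≤ l')
    (h : mig u v k l = mig u' v' k' l') : u = u' ∧ v = v' ∧ k = k' ∧ l = l' := by
  have hu : u = u' := by
    by_contra huu
    have h1 := congrFun h u
    rw [mig_apply_left huv] at h1
    by_cases hv' : u = v'
    · subst hv'; rw [mig_apply_right huv'] at h1; omega
    · rw [mig_apply_other huu hv'] at h1; omega
  subst hu
  have h1 := congrFun h u
  rw [mig_apply_left huv, mig_apply_left huv'] at h1
  have hv : v = v' := by
    by_contra hvv
    have h2 := congrFun h v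
    rw [mig_apply_right huv] at h2
    rw [mig_apply_other (Ne.symm huv) hvv] at h2
    omega
  subst hv
  have h2 := congrFun h v
  rw [mig_apply_right huv, mig_apply_right huv'] at h2
  exact ⟨rfl, rfl, by omega, by omega⟩

lemma mig_ne_br {u v x : S} (huv : u ≠ v) (k l : ℕ) (hk : 1 ≤ k) :
    mig u v k l ≠ br x := by
  intro h
  have h1 := congrFun h u
  rw [mig_apply_left huv] at h1
  have := br_nonneg x u
  omega

lemma mig_ne_dth {u v x : S} (huv : u ≠ v) (k l k' : ℕ) (hl : 1 ≤ l) :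
    mig u v k l ≠ dth x k' := by
  intro h
  have h1 := congrFun h v
  rw [mig_apply_right huv] at h1
  rcases eq_or_ne v x with rfl | hx
  · rw [dth_apply_self] at h1; omega
  · rw [dth_apply_ne hx] at h1; omega

lemma dth_inj {x : S} {k k' : ℕ} (h : dth x k = dth x k') (hk : 1 ≤ k) : k = k' := by
  have h1 := congrFun h x
  rw [dth_apply_self, dth_apply_self] at h1
  omega

lemma dth_ne_br {x x' : S} (k : ℕ) (hk : 1 ≤ k) : dth x k ≠ br x' := by
  intro h
  have h1 := congrFun h x
  rw [dth_apply_self] at h1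
  have := br_nonneg x' x
  omega


end Aux
namespace Aux
variable {d : ℕ}

section membership
variable {S : Type*} [DecidableEq S] {nbr : S → S → Prop}

lemma br_mem_changeSet (x : S) : br x ∈ ChangeSet nbr x :=
  Or.inl ⟨1, by norm_num, Or.inl rfl⟩

lemma dth_mem_changeSet (x : S) {k : ℕ} (hk : 1 ≤ k) : dth x k ∈ ChangeSet nbr x :=
  Or.inl ⟨(k:ℤ), by exact_mod_cast hk, Or.inr rfl⟩

/-- migration out of `x` into `y`. -/
lemma mig_out_mem_changeSet {x y : S} (h : nbr x y) {k l : ℕ} (hk : 1 ≤ k) (hl : 1 ≤ l) :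
    mig x y k l ∈ ChangeSet nbr x :=
  Or.inr ⟨y, h, (k:ℤ), (l:ℤ), by exact_mod_cast hk, by exact_mod_cast hl, Or.inr rfl⟩

/-- migration into `x` from `y`. -/
lemma mig_in_mem_changeSet {x y : S} (h : nbr x y) {k l : ℕ} (hk : 1 ≤ k) (hl : 1 ≤ l) :
    mig y x k l ∈ ChangeSet nbr x :=
  Or.inr ⟨y, h, (l:ℤ), (k:ℤ), by exact_mod_cast hl, by exact_mod_cast hk,
    Or.inl (by simp [mig, add_comm])⟩

lemma app_apply (ζ δ : S → ℤ) (z : S) : app ζ δ z = ζ z + δ z := rfl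

end membership

section rates
variable {N NA M : ℕ}
  {φ φA : ((Fin d × Bool) → ℤ) → ℝ≥0∞}
  {μ : ℕ → ((Fin d × Bool) → ℤ) → ℝ≥0∞}
  {lam : ℕ → ℕ → ((Fin d × Bool) → ℤ) → ℝ≥0∞}
  {c : ((Fin d → ℤ) → ℤ) → ((Fin d → ℤ) → ℤ) → ℝ≥0∞}

lemma rate_br (hc : IsBDMRate d N NA M φ φA μ lam c) (ζ : (Fin d → ℤ) → ℤ) (x : Fin d → ℤ) :
    c ζ (br x) = if ζ x < N then ((ζ x).toNat : ℝ≥0∞) else 0 := hc.1 ζ x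

lemma rate_dth_one (hc : IsBDMRate d N NA M φ φA μ lam c) (ζ : (Fin d → ℤ) → ℤ)
    (x : Fin d → ℤ) :
    c ζ (dth x 1) =
      ((ζ x).toNat : ℝ≥0∞) * (if ζ x ≤ NA then φA (profile ζ x) else φ (profile ζ x)) +
        (if (N : ℤ) - M < ζ x then μ 1 (profile ζ x) else 0) := by
  have := hc.2.1 ζ x
  simpa [dth] using this

lemma rate_dth (hc : IsBDMRate d N NA M φ φA μ lam c) (ζ : (Fin d → ℤ) → ℤ)
    (x : Fin d → ℤ) {k : ℕ} (h2 : 2 ≤ k) (hk : k ≤ M) :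
    c ζ (dth x k) = if (N : ℤ) - M ≤ ζ x - k then μ k (profile ζ x) else 0 :=
  hc.2.2.1 ζ x k h2 hk

lemma rate_mig (hc : IsBDMRate d N NA M φ φA μ lam c) (ζ : (Fin d → ℤ) → ℤ)
    {x y : Fin d → ℤ} (hxy : nbrZ d x y) {k l : ℕ} (hk : 1 ≤ k) (hkM : k ≤ M)
    (hl : 1 ≤ l) (hlN : l ≤ N) :
    c ζ (mig x y k l) =
      if (N : ℤ) - M ≤ ζ x - k ∧ ζ y + l ≤ N then lam k l (profile ζ x) else 0 :=
  hc.2.2.2.1 ζ x y k l hxy hk hkM hl hlN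

/-- classification of changes at `x` with positive part at `x` and nonzero rate -/
lemma rate_pos_classify (hc : IsBDMRate d N NA M φ φA μ lam c)
    {ζ δ : (Fin d → ℤ) → ℤ} {x : Fin d → ℤ} (h0 : c ζ δ ≠ 0) (hpos : 0 < δ x) :
    δ = br x ∨
      ∃ (j : Fin d × Bool) (k l : ℕ), 1 ≤ k ∧ k ≤ M ∧ 1 ≤ l ∧ l ≤ N ∧ δ = mig (nb x j) x k l := by
  rcases hc.2.2.2.2 ζ δ h0 with ⟨x', h⟩ | ⟨x', k, hk1, hkM, h⟩ | ⟨x', y', k, l, hn, hk1, hkM, hl1, hlN, h⟩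
  · left
    subst h
    rcases eq_or_ne x x' with rfl | hne
    · rfl
    · exfalso; rw [Pi.single_eq_of_ne hne] at hpos; omega
  · exfalso
    subst h
    rcases eq_or_ne x x' with rfl | hne
    · rw [Pi.single_eq_same] at hpos; omega
    · rw [Pi.single_eq_of_ne hne] at hpos; omega
  · right
    have hne : x' ≠ y' := nbrZ_ne hn
    have hδ : δ = mig x' y' k l := by
      simp only [mig, h]
    have hx : x = y' := by
      by_contra hxy'
      rcases eq_or_ne x x' with rfl | hxx'
      · rw [hδ, mig_apply_left hne] at hpos; omega
      · rw [hδ, mig_apply_other hxx' hxy'] at hpos; omega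
    subst hx
    obtain ⟨j, hj⟩ := exists_nb (nbrZ_symm hn)
    exact ⟨j, k, l, hk1, hkM, hl1, hlN, by rw [hδ, hj]⟩

lemma rate_neg_classify (hc : IsBDMRate d N NA M φ φA μ lam c)
    {ζ δ : (Fin d → ℤ) → ℤ} {x : Fin d → ℤ} (h0 : c ζ δ ≠ 0) (hneg : δ x < 0) :
    (∃ k : ℕ, 1 ≤ k ∧ k ≤ M ∧ δ = dth x k) ∨
      ∃ (j : Fin d × Bool) (k l : ℕ), 1 ≤ k ∧ k ≤ M ∧ 1 ≤ l ∧ l ≤ N ∧ δ = mig x (nb x j) k l := by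
  rcases hc.2.2.2.2 ζ δ h0 with ⟨x', h⟩ | ⟨x', k, hk1, hkM, h⟩ | ⟨x', y', k, l, hn, hk1, hkM, hl1, hlN, h⟩
  · exfalso
    subst h
    rcases eq_or_ne x x' with rfl | hne
    · rw [Pi.single_eq_same] at hneg; omega
    · rw [Pi.single_eq_of_ne hne] at hneg; omega
  · left
    subst h
    rcases eq_or_ne x x' with rfl | hne
    · exact ⟨k, hk1, hkM, rfl⟩
    · exfalso; rw [Pi.single_eq_of_ne hne] at hneg; omega
  · right
    have hne : x' ≠ y' := nbrZ_ne hn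
    have hδ : δ = mig x' y' k l := by simp only [mig, h]
    have hx : x = x' := by
      by_contra hxx'
      rcases eq_or_ne x y' with rfl | hxy'
      · rw [hδ, mig_apply_right hne] at hneg; omega
      · rw [hδ, mig_apply_other hxx' hxy'] at hneg; omega
    subst hx
    obtain ⟨j, hj⟩ := exists_nb hn
    exact ⟨j, k, l, hk1, hkM, hl1, hlN, by rw [hδ, hj]⟩

end rates
end Aux
namespace Aux

lemma tsum_set_le_sum {β : Type*} (f : β → ℝ≥0∞) (s : Set β) (t : Finset β)
    (h : ∀ b ∈ s, f b ≠ 0 → b ∈ t) : ∑' b : s, f b ≤ ∑ b ∈ t, f b := by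
  classical
  rw [tsum_subtype]
  rw [tsum_eq_sum (s := t) (f := s.indicator f)]
  · exact Finset.sum_le_sum fun b _ => Set.indicator_le_self s f b
  · intro b hb
    by_cases hbs : b ∈ s
    · rw [Set.indicator_of_mem hbs]
      by_contra h0
      exact hb (h b hbs h0)
    · exact Set.indicator_of_notMem hbs f

lemma sum_le_tsum_set {β : Type*} (f : β → ℝ≥0∞) (s : Set β) (t : Finset β)
    (h : ∀ b ∈ t, b ∈ s) : ∑ b ∈ t, f b ≤ ∑' b : s, f b := by
  classical
  rw [tsum_subtype]
  calc ∑ b ∈ t, f b = ∑ b ∈ t, s.indicator f b := by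
        refine Finset.sum_congr rfl fun b hb => ?_
        rw [Set.indicator_of_mem (h b hb)]
    _ ≤ ∑' b, s.indicator f b := ENNReal.sum_le_tsum t

lemma indicator_le_self' {β : Type*} (s : Set β) (f : β → ℝ≥0∞) (b : β) :
    s.indicator f b ≤ f b := Set.indicator_le_self s f b

end Aux
namespace Aux
section helpers
variable {S : Type*} [DecidableEq S]

lemma applicable_mig {W : Set ℤ} {ζ : S → ℤ} {u v : S} (huv : u ≠ v) {k l : ℕ}
    (h1 : ζ u - k ∈ W) (h2 : ζ v + l ∈ W) (h3 : ∀ z, ζ z ∈ W) :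
    Applicable W ζ (mig u v k l) := by
  intro z
  by_cases hu : z = u
  · subst hu; rw [mig_apply_left huv]
    simpa [sub_eq_add_neg] using h1
  · by_cases hv : z = v
    · subst hv; rw [mig_apply_right huv]; exact h2
    · rw [mig_apply_other hu hv]; simpa using h3 z

lemma applicable_br {W : Set ℤ} {ζ : S → ℤ} {x : S}
    (h1 : ζ x + 1 ∈ W) (h3 : ∀ z, ζ z ∈ W) : Applicable W ζ (br x) := by
  intro z
  by_cases hx : z = x
  · subst hx; rw [br_apply_self]; exact h1
  · rw [br_apply_ne hx]; simpa using h3 z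

lemma applicable_dth {W : Set ℤ} {ζ : S → ℤ} {x : S} {k : ℕ}
    (h1 : ζ x - k ∈ W) (h3 : ∀ z, ζ z ∈ W) : Applicable W ζ (dth x k) := by
  intro z
  by_cases hx : z = x
  · subst hx; rw [dth_apply_self]; simpa [sub_eq_add_neg] using h1
  · rw [dth_apply_ne hx]; simpa using h3 z

lemma mem_indicator_ne_zero {β : Type*} {s : Set β} {f : β → ℝ≥0∞} {b : β}
    (h : s.indicator f b ≠ 0) : b ∈ s ∧ f b ≠ 0 := by
  by_cases hb : b ∈ s
  · rw [Set.indicator_of_mem hb] at h; exact ⟨hb, h⟩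
  · rw [Set.indicator_of_notMem hb] at h; exact absurd rfl h

end helpers

section main
variable {d N NA M : ℕ}
  {φ1 φA1 φ2 φA2 : ((Fin d × Bool) → ℤ) → ℝ≥0∞}
  {μ1 μ2 : ℕ → ((Fin d × Bool) → ℤ) → ℝ≥0∞}
  {lam1 lam2 : ℕ → ℕ → ((Fin d × Bool) → ℤ) → ℝ≥0∞}
  {c1 c2 : ((Fin d → ℤ) → ℤ) → ((Fin d → ℤ) → ℤ) → ℝ≥0∞}

lemma condC1_main (hMN : M ≤ N)
    (hc1 : IsBDMRate d N NA M φ1 φA1 μ1 lam1 c1)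
    (hc2 : IsBDMRate d N NA M φ2 φA2 μ2 lam2 c2)
    (hb : ∀ r s : (Fin d × Bool) → ℤ, (∀ j, r j ∈ Set.Icc (0 : ℤ) N) →
        (∀ j, s j ∈ Set.Icc (0 : ℤ) N) → r ≤ s →
        ∀ m k j, 1 ≤ m → m ≤ M → 1 ≤ k → k ≤ j → j ≤ N →
        ∑ i ∈ Finset.Icc 1 m, lam1 i j r ≤ ∑ i ∈ Finset.Icc 1 m, lam2 i k s)
    (x : Fin d → ℤ) (η ξ : (Fin d → ℤ) → ℤ)
    (hη : ∀ z, η z ∈ Set.Icc (0 : ℤ) N) (hξ : ∀ z, ξ z ∈ Set.Icc (0 : ℤ) N)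
    (hle : η ≤ ξ) :
    CondC1 (Set.Icc (0 : ℤ) N) (nbrZ d) x η ξ (c1 η) (c2 ξ) := by
  classical
  intro D1 hD1
  set W : Set ℤ := Set.Icc (0 : ℤ) N with hW
  set U : Set ((Fin d → ℤ) → ℤ) := upArrow W (nbrZ d) x η ξ D1 with hUdef
  have hle' : ∀ z, η z ≤ ξ z := fun z => Pi.le_def.1 hle z
  have hαβ : η x ≤ ξ x := hle' x
  set Δ : ℕ := (ξ x - η x).toNat with hΔdef
  have hΔ : (Δ : ℤ) = ξ x - η x := Int.toNat_of_nonneg (by omega)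
  set f : ((Fin d → ℤ) → ℤ) → ℝ≥0∞ := D1.indicator (c1 η) with hf
  set aM : (Fin d × Bool) × ℕ × ℕ → ((Fin d → ℤ) → ℤ) :=
    fun p => mig (nb x p.1) x p.2.1 p.2.2 with haM
  set T : Finset ((Fin d × Bool) × ℕ × ℕ) :=
    Finset.univ ×ˢ Finset.Icc 1 M ×ˢ Finset.Icc 1 N with hT
  set Fm : (Fin d × Bool) × ℕ × ℕ → ℝ≥0∞ := fun p => f (aM p) with hFm
  -- facts about nonzero Fm
  have hFm_facts : ∀ j (k l : ℕ), 1 ≤ k → k ≤ M → 1 ≤ l → l ≤ N →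
      Fm (j, k, l) ≠ 0 →
      mig (nb x j) x k l ∈ D1 ∧
      ((N:ℤ) - M ≤ η (nb x j) - k ∧ η x + l ≤ N) ∧ Δ < l := by
    intro j k l hk1 hkM hl1 hlN h0
    obtain ⟨hmem, hc0⟩ := mem_indicator_ne_zero h0
    have hR := hD1 hmem
    obtain ⟨_, happ, hlt⟩ := hR
    have hyx : nb x j ≠ x := nb_ne x j
    have hax : app η (mig (nb x j) x k l) x = η x + l := by
      rw [app_apply, mig_apply_right hyx]
    rw [hax] at hlt
    have hΔl : Δ < l := by omega
    have hrate := rate_mig hc1 η (nbrZ_symm (nbrZ_nb x j)) hk1 hkM hl1 hlN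
    rw [hrate] at hc0
    by_cases hind : (N:ℤ) - M ≤ η (nb x j) - k ∧ η x + l ≤ N
    · exact ⟨hmem, hind, hΔl⟩
    · rw [if_neg hind] at hc0; exact absurd rfl hc0
  -- Step 1
  have step1 : ∑' a : D1, c1 η a.1 ≤ f (br x) + ∑ p ∈ T, Fm p := by
    have hbr_notmem : br x ∉ T.image aM := by
      intro hmem
      obtain ⟨p, hp, hp2⟩ := Finset.mem_image.1 hmem
      rw [hT] at hp
      simp only [Finset.mem_product, Finset.mem_Icc] at hp
      exact mig_ne_br (nb_ne x p.1) _ _ hp.2.1.1 hp2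
    have hinj : ∀ p ∈ T, ∀ q ∈ T, aM p = aM q → p = q := by
      intro p hp q hq hpq
      rw [hT] at hp hq
      simp only [Finset.mem_product, Finset.mem_Icc] at hp hq
      obtain ⟨h1, h2, h3, h4⟩ := mig_inj (nb_ne x p.1) (nb_ne x q.1)
        hp.2.1.1 hp.2.2.1 hq.2.1.1 hq.2.2.1 hpq
      have := nb_injective x h1
      exact Prod.ext this (Prod.ext h3 h4)
    calc ∑' a : D1, c1 η a.1 = ∑' a : D1, f a.1 := by
          refine tsum_congr fun a => ?_
          rw [hf, Set.indicator_of_mem a.2]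
      _ ≤ ∑ b ∈ insert (br x) (T.image aM), f b := by
          refine tsum_set_le_sum f D1 _ ?_
          intro a haD ha0
          have hc0 : c1 η a ≠ 0 := by
            rw [hf, Set.indicator_of_mem haD] at ha0; exact ha0
          obtain ⟨_, happ, hlt⟩ := hD1 haD
          have hpos : 0 < a x := by
            rw [app_apply] at hlt; omega
          rcases rate_pos_classify hc1 hc0 hpos with h | ⟨j, k, l, hk1, hkM, hl1, hlN, h⟩
          · rw [h]; exact Finset.mem_insert_self _ _
          · refine Finset.mem_insert_of_mem (Finset.mem_image.2 ⟨(j, k, l), ?_, h.symm⟩)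
            rw [hT]
            simp only [Finset.mem_product, Finset.mem_Icc]
            exact ⟨Finset.mem_univ _, ⟨hk1, hkM⟩, ⟨hl1, hlN⟩⟩
      _ = f (br x) + ∑ b ∈ T.image aM, f b := Finset.sum_insert hbr_notmem
      _ = f (br x) + ∑ p ∈ T, Fm p := by rw [Finset.sum_image hinj]
  -- the RHS pieces
  set Gb : ℝ≥0∞ := if f (br x) ≠ 0 then c2 ξ (br x) else 0 with hGb
  set bM : (Fin d × Bool) × ℕ × ℕ → ((Fin d → ℤ) → ℤ) :=
    fun p => mig (nb x p.1) x p.2.1 (p.2.2 - Δ) with hbM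
  set Gm : (Fin d × Bool) × ℕ × ℕ → ℝ≥0∞ := fun p =>
    if ∃ k', k' ∈ Finset.Icc p.2.1 M ∧ Fm (p.1, k', p.2.2) ≠ 0 then c2 ξ (bM p) else 0 with hGm
  -- Step 2 : birth part
  have step2b : f (br x) ≤ Gb := by
    by_cases h0 : f (br x) = 0
    · rw [h0]; exact zero_le
    · rw [hGb, if_pos h0]
      obtain ⟨hmem, hc0⟩ := mem_indicator_ne_zero h0
      obtain ⟨_, happ, hlt⟩ := hD1 hmem
      have h1 : app η (br x) x = η x + 1 := by rw [app_apply, br_apply_self]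
      rw [h1] at hlt
      have heq : ξ x = η x := by omega
      rw [hf, Set.indicator_of_mem hmem, rate_br hc1, rate_br hc2, heq]
  -- Step 2 : migration part, per (j, l)
  have step2m : ∀ (j : Fin d × Bool), ∀ l ∈ Finset.Icc 1 N,
      ∑ k ∈ Finset.Icc 1 M, Fm (j, k, l) ≤ ∑ k ∈ Finset.Icc 1 M, Gm (j, k, l) := by
    intro j l hlmem
    rw [Finset.mem_Icc] at hlmem
    obtain ⟨hl1, hlN⟩ := hlmem
    set K : Finset ℕ := (Finset.Icc 1 M).filter (fun k => Fm (j, k, l) ≠ 0) with hK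
    have hsumK : ∑ k ∈ Finset.Icc 1 M, Fm (j, k, l) = ∑ k ∈ K, Fm (j, k, l) :=
      (Finset.sum_filter_ne_zero _).symm
    by_cases hKne : K.Nonempty
    · set m : ℕ := K.max' hKne with hm
      have hmK : m ∈ K := K.max'_mem hKne
      rw [hK, Finset.mem_filter, Finset.mem_Icc] at hmK
      obtain ⟨⟨hm1, hmM⟩, hmF⟩ := hmK
      obtain ⟨hmD, ⟨hind1, hind2⟩, hΔl⟩ := hFm_facts j m l hm1 hmM hl1 hlN hmF
      set y : Fin d → ℤ := nb x j with hy
      have hyx : y ≠ x := nb_ne x j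
      have hcast : ((l - Δ : ℕ) : ℤ) = (l : ℤ) - (ξ x - η x) := by
        rw [Nat.cast_sub (le_of_lt hΔl)]; omega
      have hr : ∀ j', profile η y j' ∈ Set.Icc (0:ℤ) N := fun j' => hη _
      have hs : ∀ j', profile ξ y j' ∈ Set.Icc (0:ℤ) N := fun j' => hξ _
      have hrs : profile η y ≤ profile ξ y := fun j' => hle' _
      calc ∑ k ∈ Finset.Icc 1 M, Fm (j, k, l) = ∑ k ∈ K, Fm (j, k, l) := hsumK
        _ ≤ ∑ k ∈ K, lam1 k l (profile η y) := by
            refine Finset.sum_le_sum fun k hkK => ?_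
            rw [hK, Finset.mem_filter, Finset.mem_Icc] at hkK
            obtain ⟨⟨hk1, hkM⟩, hkF⟩ := hkK
            refine le_trans (indicator_le_self' D1 (c1 η) _) ?_
            rw [rate_mig hc1 η (nbrZ_symm (nbrZ_nb x j)) hk1 hkM hl1 hlN]
            split <;> simp [hy]
        _ ≤ ∑ k ∈ Finset.Icc 1 m, lam1 k l (profile η y) := by
            refine Finset.sum_le_sum_of_subset_of_nonneg ?_ (fun _ _ _ => zero_le)
            intro k hkK
            have hkK' := hkK
            rw [hK, Finset.mem_filter, Finset.mem_Icc] at hkK'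
            rw [Finset.mem_Icc]
            exact ⟨hkK'.1.1, K.le_max' k hkK⟩
        _ ≤ ∑ k ∈ Finset.Icc 1 m, lam2 k (l - Δ) (profile ξ y) := by
            refine hb _ _ hr hs hrs m (l - Δ) l hm1 hmM ?_ ?_ hlN
            · omega
            · omega
        _ = ∑ k ∈ Finset.Icc 1 m, c2 ξ (mig y x k (l - Δ)) := by
            refine Finset.sum_congr rfl fun k hk => ?_
            rw [Finset.mem_Icc] at hk
            rw [rate_mig hc2 ξ (nbrZ_symm (nbrZ_nb x j)) hk.1 (le_trans hk.2 hmM)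
              (by omega) (by omega)]
            have hcond : (N:ℤ) - M ≤ ξ y - k ∧ ξ x + ((l - Δ : ℕ):ℤ) ≤ N := by
              have h1 : η y ≤ ξ y := hle' y
              have hkm : (k:ℤ) ≤ (m:ℤ) := by exact_mod_cast hk.2
              constructor
              · omega
              · rw [hcast]; omega
            rw [if_pos hcond]
        _ = ∑ k ∈ Finset.Icc 1 m, Gm (j, k, l) := by
            refine Finset.sum_congr rfl fun k hk => ?_
            rw [Finset.mem_Icc] at hk
            simp only [hGm]
            rw [if_pos ⟨m, Finset.mem_Icc.2 ⟨hk.2, hmM⟩, hmF⟩]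
        _ ≤ ∑ k ∈ Finset.Icc 1 M, Gm (j, k, l) := by
            refine Finset.sum_le_sum_of_subset_of_nonneg ?_ (fun _ _ _ => zero_le)
            intro k hk
            rw [Finset.mem_Icc] at hk ⊢
            omega
    · rw [hsumK]
      rw [Finset.not_nonempty_iff_eq_empty] at hKne
      rw [hKne, Finset.sum_empty]
      exact zero_le
  -- facts about nonzero Gm
  have hGm_facts : ∀ (p : (Fin d × Bool) × ℕ × ℕ), p ∈ T → Gm p ≠ 0 →
      1 ≤ p.2.1 ∧ Δ < p.2.2 ∧ bM p ∈ U := by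
    intro p hpT h0
    obtain ⟨j, k, l⟩ := p
    rw [hT] at hpT
    simp only [Finset.mem_product, Finset.mem_Icc] at hpT
    obtain ⟨-, ⟨hk1, hkM⟩, hl1, hlN⟩ := hpT
    simp only [hGm] at h0
    by_cases hcond : ∃ k', k' ∈ Finset.Icc k M ∧ Fm ((j, k, l).1, k', (j, k, l).2.2) ≠ 0
    swap
    · rw [if_neg hcond] at h0; exact absurd rfl h0
    obtain ⟨k', hk'mem, hk'F⟩ := hcond
    rw [Finset.mem_Icc] at hk'mem
    obtain ⟨hkk', hk'M⟩ := hk'mem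
    obtain ⟨hmD, ⟨hind1, hind2⟩, hΔl⟩ := hFm_facts j k' l (le_trans hk1 hkk') hk'M hl1 hlN hk'F
    set y : Fin d → ℤ := nb x j with hy
    have hyx : y ≠ x := nb_ne x j
    have hcast : ((l - Δ : ℕ) : ℤ) = (l : ℤ) - (ξ x - η x) := by
      rw [Nat.cast_sub (le_of_lt hΔl)]; omega
    have hηy : η y ≤ ξ y := hle' y
    have hbMval : bM (j, k, l) = mig y x k (l - Δ) := rfl
    refine ⟨hk1, hΔl, ?_⟩
    show bM (j, k, l) ∈ U
    rw [hbMval]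
    refine ⟨?_, ?_, ?_⟩
    · exact mig_in_mem_changeSet (nbrZ_nb x j) hk1 (by omega)
    · refine applicable_mig hyx ?_ ?_ hξ
      · have hkk : (k:ℤ) ≤ (k':ℤ) := by exact_mod_cast hkk'
        constructor
        · have := (hξ y).2; omega
        · have := (hξ y).2; omega
      · rw [hcast]
        constructor
        · have := (hξ x).1; have := (hη x).1; omega
        · omega
    · refine ⟨mig (nb x j) x k' l, hmD, ?_⟩
      refine Pi.le_def.mpr fun z => ?_
      rw [app_apply, app_apply]
      by_cases hzy : z = y
      · subst hzy
        rw [mig_apply_left hyx, mig_apply_left hyx]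
        have hkk : (k:ℤ) ≤ (k':ℤ) := by exact_mod_cast hkk'
        omega
      · by_cases hzx : z = x
        · subst hzx
          rw [mig_apply_right hyx, mig_apply_right hyx, hcast]
          omega
        · rw [mig_apply_other hzy hzx, mig_apply_other hzy hzx]
          have := hle' z
          omega
  -- Step 3
  have step3 : Gb + ∑ p ∈ T, Gm p ≤ ∑' b : U, c2 ξ b.1 := by
    set Tm : Finset ((Fin d × Bool) × ℕ × ℕ) := T.filter (fun p => Gm p ≠ 0) with hTm
    have hTm_sub : ∀ p ∈ Tm, p ∈ T ∧ Gm p ≠ 0 := by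
      intro p hp; rw [hTm, Finset.mem_filter] at hp; exact hp
    have hinj : ∀ p ∈ Tm, ∀ q ∈ Tm, bM p = bM q → p = q := by
      intro p hp q hq hpq
      obtain ⟨hpT, hp0⟩ := hTm_sub p hp
      obtain ⟨hqT, hq0⟩ := hTm_sub q hq
      obtain ⟨hp1, hpΔ, -⟩ := hGm_facts p hpT hp0
      obtain ⟨hq1, hqΔ, -⟩ := hGm_facts q hqT hq0
      obtain ⟨h1, -, h3, h4⟩ := mig_inj (nb_ne x p.1) (nb_ne x q.1)
        hp1 (by omega) hq1 (by omega) hpq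
      have hj := nb_injective x h1
      have : p.2.2 = q.2.2 := by omega
      exact Prod.ext hj (Prod.ext h3 this)
    have hGmval : ∀ p ∈ Tm, Gm p = c2 ξ (bM p) := by
      intro p hp
      obtain ⟨hpT, hp0⟩ := hTm_sub p hp
      simp only [hGm] at hp0 ⊢
      by_cases hcond : ∃ k', k' ∈ Finset.Icc p.2.1 M ∧ Fm (p.1, k', p.2.2) ≠ 0
      · rw [if_pos hcond]
      · rw [if_neg hcond] at hp0; exact absurd rfl hp0
    by_cases hGb0 : Gb = 0
    · -- only migration part
      rw [hGb0, zero_add]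
      calc ∑ p ∈ T, Gm p = ∑ p ∈ Tm, Gm p := (Finset.sum_filter_ne_zero _).symm
        _ = ∑ p ∈ Tm, c2 ξ (bM p) := Finset.sum_congr rfl hGmval
        _ = ∑ b ∈ Tm.image bM, c2 ξ b := (Finset.sum_image hinj).symm
        _ ≤ ∑' b : U, c2 ξ b.1 := by
            refine sum_le_tsum_set (c2 ξ) U _ ?_
            intro b hbmem
            obtain ⟨p, hp, rfl⟩ := Finset.mem_image.1 hbmem
            obtain ⟨hpT, hp0⟩ := hTm_sub p hp
            exact (hGm_facts p hpT hp0).2.2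
    · -- birth ∈ U
      have hbrU : br x ∈ U := by
        rw [hGb] at hGb0
        have hfb : f (br x) ≠ 0 := by
          intro h; rw [if_neg (fun hh => hh h)] at hGb0; exact hGb0 rfl
        obtain ⟨hmem, hc0⟩ := mem_indicator_ne_zero hfb
        obtain ⟨-, happ, hlt⟩ := hD1 hmem
        have h1 := happ x
        rw [br_apply_self] at h1
        have heq : ξ x = η x := by
          have h2 : app η (br x) x = η x + 1 := by rw [app_apply, br_apply_self]
          rw [h2] at hlt; omega
        refine ⟨br_mem_changeSet x, applicable_br (by rw [heq]; exact h1) hξ, br x, hmem, ?_⟩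
        refine Pi.le_def.mpr fun z => ?_
        rw [app_apply, app_apply]
        have := hle' z
        omega
      have hGbval : Gb = c2 ξ (br x) := by
        rw [hGb] at hGb0 ⊢
        by_cases h : f (br x) ≠ 0
        · rw [if_pos h]
        · rw [if_neg h] at hGb0; exact absurd rfl hGb0
      have hbr_notmem : br x ∉ Tm.image bM := by
        intro hmem
        obtain ⟨p, hp, hp2⟩ := Finset.mem_image.1 hmem
        obtain ⟨hpT, hp0⟩ := hTm_sub p hp
        obtain ⟨hp1, -, -⟩ := hGm_facts p hpT hp0
        exact mig_ne_br (nb_ne x p.1) _ _ hp1 hp2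
      calc Gb + ∑ p ∈ T, Gm p = Gb + ∑ p ∈ Tm, Gm p := by
            rw [Finset.sum_filter_ne_zero]
        _ = c2 ξ (br x) + ∑ p ∈ Tm, c2 ξ (bM p) := by
            rw [hGbval, Finset.sum_congr rfl hGmval]
        _ = c2 ξ (br x) + ∑ b ∈ Tm.image bM, c2 ξ b := by rw [Finset.sum_image hinj]
        _ = ∑ b ∈ insert (br x) (Tm.image bM), c2 ξ b := (Finset.sum_insert hbr_notmem).symm
        _ ≤ ∑' b : U, c2 ξ b.1 := by
            refine sum_le_tsum_set (c2 ξ) U _ ?_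
            intro b hbmem
            rcases Finset.mem_insert.1 hbmem with rfl | hbmem'
            · exact hbrU
            · obtain ⟨p, hp, rfl⟩ := Finset.mem_image.1 hbmem'
              obtain ⟨hpT, hp0⟩ := hTm_sub p hp
              exact (hGm_facts p hpT hp0).2.2
  -- assemble
  refine le_trans step1 (le_trans ?_ step3)
  refine add_le_add step2b ?_
  -- reorganize triple product sum
  have hre : ∀ G : (Fin d × Bool) × ℕ × ℕ → ℝ≥0∞,
      ∑ p ∈ T, G p = ∑ j : Fin d × Bool, ∑ l ∈ Finset.Icc 1 N, ∑ k ∈ Finset.Icc 1 M,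
        G (j, k, l) := by
    intro G
    rw [hT, Finset.sum_product]
    refine Finset.sum_congr rfl fun j _ => ?_
    rw [Finset.sum_product]
    exact Finset.sum_comm
  rw [hre Fm, hre Gm]
  refine Finset.sum_le_sum fun j _ => ?_
  refine Finset.sum_le_sum fun l hl => ?_
  exact step2m j l hl
end main
end Aux

namespace Aux
section main2
variable {d N NA M : ℕ}
  {φ1 φA1 φ2 φA2 : ((Fin d × Bool) → ℤ) → ℝ≥0∞}
  {μ1 μ2 : ℕ → ((Fin d × Bool) → ℤ) → ℝ≥0∞}
  {lam1 lam2 : ℕ → ℕ → ((Fin d × Bool) → ℤ) → ℝ≥0∞}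
  {c1 c2 : ((Fin d → ℤ) → ℤ) → ((Fin d → ℤ) → ℤ) → ℝ≥0∞}

lemma condC2_main (hd : 1 ≤ d) (hMN : M ≤ N)
    (hc1 : IsBDMRate d N NA M φ1 φA1 μ1 lam1 c1)
    (hc2 : IsBDMRate d N NA M φ2 φA2 μ2 lam2 c2)
    (ha : ∀ r s : (Fin d × Bool) → ℤ, (∀ j, r j ∈ Set.Icc (0 : ℤ) N) →
        (∀ j, s j ∈ Set.Icc (0 : ℤ) N) → r ≤ s →
        φ2 s ≤ φ1 r ∧ φA2 s ≤ φA1 r)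
    (hcc : ∀ r s : (Fin d × Bool) → ℤ, (∀ j, r j ∈ Set.Icc (0 : ℤ) N) →
        (∀ j, s j ∈ Set.Icc (0 : ℤ) N) → r ≤ s →
        ∀ n i l, n ≤ N → 1 ≤ i → i ≤ l → l ≤ M →
        μ2 l s / (2 * (d : ℝ≥0∞)) + ∑ j ∈ Finset.Icc 1 n, lam2 l j s ≤
          μ1 i r / (2 * (d : ℝ≥0∞)) + ∑ j ∈ Finset.Icc 1 n, lam1 i j r)
    (x : Fin d → ℤ) (η ξ : (Fin d → ℤ) → ℤ)
    (hη : ∀ z, η z ∈ Set.Icc (0 : ℤ) N) (hξ : ∀ z, ξ z ∈ Set.Icc (0 : ℤ) N)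
    (hle : η ≤ ξ) :
    CondC2 (Set.Icc (0 : ℤ) N) (nbrZ d) x η ξ (c1 η) (c2 ξ) := by
  classical
  intro D2 hD2
  set W : Set ℤ := Set.Icc (0 : ℤ) N with hW
  set DA : Set ((Fin d → ℤ) → ℤ) := downArrow W (nbrZ d) x η ξ D2 with hDAdef
  have hle' : ∀ z, η z ≤ ξ z := fun z => Pi.le_def.1 hle z
  have hαβ : η x ≤ ξ x := hle' x
  set Δ : ℕ := (ξ x - η x).toNat with hΔdef
  have hΔ : (Δ : ℤ) = ξ x - η x := Int.toNat_of_nonneg (by omega)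
  set f : ((Fin d → ℤ) → ℤ) → ℝ≥0∞ := D2.indicator (c2 ξ) with hf
  set Fd : ℕ → ℝ≥0∞ := fun l => f (dth x l) with hFd
  set aM : (Fin d × Bool) × ℕ × ℕ → ((Fin d → ℤ) → ℤ) :=
    fun p => mig x (nb x p.1) p.2.1 p.2.2 with haM
  set Fm : (Fin d × Bool) × ℕ × ℕ → ℝ≥0∞ := fun p => f (aM p) with hFm
  set T : Finset ((Fin d × Bool) × ℕ × ℕ) :=
    Finset.univ ×ˢ Finset.Icc 1 M ×ˢ Finset.Icc 1 N with hT
  -- basic facts about nonzero Fd and Fm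
  have hFd_facts : ∀ l : ℕ, Fd l ≠ 0 →
      dth x l ∈ D2 ∧ Δ < l ∧ 0 ≤ ξ x - l := by
    intro l h0
    obtain ⟨hmem, hc0⟩ := mem_indicator_ne_zero h0
    obtain ⟨-, happ, hlt⟩ := hD2 hmem
    have hax : app ξ (dth x l) x = ξ x - l := by
      rw [app_apply, dth_apply_self]; ring
    rw [hax] at hlt
    have h1 := happ x
    rw [dth_apply_self] at h1
    have h1' : ξ x - l ∈ W := by
      have : ξ x + -(l:ℤ) = ξ x - l := by ring
      rwa [this] at h1
    exact ⟨hmem, by omega, h1'.1⟩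
  have hFm_facts : ∀ j (l lt : ℕ), 1 ≤ l → l ≤ M → 1 ≤ lt → lt ≤ N →
      Fm (j, l, lt) ≠ 0 →
      mig x (nb x j) l lt ∈ D2 ∧
      ((N:ℤ) - M ≤ ξ x - l ∧ ξ (nb x j) + lt ≤ N) ∧ Δ < l := by
    intro j l lt hl1 hlM hlt1 hltN h0
    obtain ⟨hmem, hc0⟩ := mem_indicator_ne_zero h0
    obtain ⟨-, happ, hltR⟩ := hD2 hmem
    have hyx : nb x j ≠ x := nb_ne x j
    have hax : app ξ (mig x (nb x j) l lt) x = ξ x - l := by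
      rw [app_apply, mig_apply_left hyx.symm]; ring
    rw [hax] at hltR
    rw [rate_mig hc2 ξ (nbrZ_nb x j) hl1 hlM hlt1 hltN] at hc0
    by_cases hind : (N:ℤ) - M ≤ ξ x - l ∧ ξ (nb x j) + lt ≤ N
    · exact ⟨hmem, hind, by omega⟩
    · rw [if_neg hind] at hc0; exact absurd rfl hc0
  -- Step 1
  have step1 : ∑' b : D2, c2 ξ b.1 ≤
      ∑ l ∈ Finset.Icc 1 M, Fd l + ∑ p ∈ T, Fm p := by
    have hinj_d : ∀ l ∈ Finset.Icc 1 M, ∀ l' ∈ Finset.Icc 1 M,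
        dth x l = dth x l' → l = l' := by
      intro l hl l' hl' hh
      rw [Finset.mem_Icc] at hl
      exact dth_inj hh hl.1
    have hinj_m : ∀ p ∈ T, ∀ q ∈ T, aM p = aM q → p = q := by
      intro p hp q hq hpq
      rw [hT] at hp hq
      simp only [Finset.mem_product, Finset.mem_Icc] at hp hq
      obtain ⟨-, h2, h3, h4⟩ := mig_inj (Ne.symm (nb_ne x p.1)) (Ne.symm (nb_ne x q.1))
        hp.2.1.1 hp.2.2.1 hq.2.1.1 hq.2.2.1 hpq
      have := nb_injective x h2
      exact Prod.ext this (Prod.ext h3 h4)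
    have hdisj : Disjoint ((Finset.Icc 1 M).image (dth x)) (T.image aM) := by
      rw [Finset.disjoint_left]
      intro b hb hb'
      obtain ⟨l, hl, rfl⟩ := Finset.mem_image.1 hb
      obtain ⟨p, hp, hp2⟩ := Finset.mem_image.1 hb'
      rw [hT] at hp
      simp only [Finset.mem_product, Finset.mem_Icc] at hp
      exact mig_ne_dth (Ne.symm (nb_ne x p.1)) _ _ _ hp.2.2.1 hp2
    calc ∑' b : D2, c2 ξ b.1 = ∑' b : D2, f b.1 := by
          refine tsum_congr fun b => ?_
          rw [hf, Set.indicator_of_mem b.2]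
      _ ≤ ∑ b ∈ ((Finset.Icc 1 M).image (dth x)) ∪ (T.image aM), f b := by
          refine tsum_set_le_sum f D2 _ ?_
          intro b hbD hb0
          have hc0 : c2 ξ b ≠ 0 := by
            rw [hf, Set.indicator_of_mem hbD] at hb0; exact hb0
          obtain ⟨-, happ, hltR⟩ := hD2 hbD
          have hneg : b x < 0 := by
            rw [app_apply] at hltR
            have := hle' x
            omega
          rcases rate_neg_classify hc2 hc0 hneg with ⟨k, hk1, hkM, h⟩ |
            ⟨j, k, l, hk1, hkM, hl1, hlN, h⟩
          · refine Finset.mem_union_left _ (Finset.mem_image.2 ⟨k, ?_, h.symm⟩)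
            rw [Finset.mem_Icc]; exact ⟨hk1, hkM⟩
          · refine Finset.mem_union_right _ (Finset.mem_image.2 ⟨(j, k, l), ?_, h.symm⟩)
            rw [hT]
            simp only [Finset.mem_product, Finset.mem_Icc]
            exact ⟨Finset.mem_univ _, ⟨hk1, hkM⟩, ⟨hl1, hlN⟩⟩
      _ = ∑ b ∈ (Finset.Icc 1 M).image (dth x), f b + ∑ b ∈ T.image aM, f b :=
          Finset.sum_union hdisj
      _ = ∑ l ∈ Finset.Icc 1 M, Fd l + ∑ p ∈ T, Fm p := by
          rw [Finset.sum_image hinj_d, Finset.sum_image hinj_m]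
  -- level structure
  set Lvl : ℕ → Prop := fun l =>
    Fd l ≠ 0 ∨ ∃ j, ∃ lt ∈ Finset.Icc 1 N, Fm (j, l, lt) ≠ 0 with hLvl
  set nn : ℕ → (Fin d × Bool) → ℕ := fun l j =>
    if hTne : ((Finset.Icc 1 N).filter (fun lt => Fm (j, l, lt) ≠ 0)).Nonempty
    then ((Finset.Icc 1 N).filter (fun lt => Fm (j, l, lt) ≠ 0)).max' hTne
      + (ξ (nb x j) - η (nb x j)).toNat
    else if dth x l ∈ D2 then (ξ (nb x j) - η (nb x j)).toNat else 0 with hnn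
  set Gd : ℕ → ℝ≥0∞ := fun l => if Lvl l then c1 η (dth x (l - Δ)) else 0 with hGd
  set Gm : (Fin d × Bool) × ℕ × ℕ → ℝ≥0∞ := fun p =>
    if Lvl p.2.1 ∧ 1 ≤ p.2.2 ∧ p.2.2 ≤ nn p.2.1 p.1
    then c1 η (mig x (nb x p.1) (p.2.1 - Δ) p.2.2) else 0 with hGm
  -- witness from a level
  have hLvl_wit : ∀ l : ℕ, 1 ≤ l → l ≤ M → Lvl l →
      (Δ < l ∧ 0 ≤ ξ x - l) ∧
      ∃ b ∈ D2, b x = -(l:ℤ) ∧ ∀ z, z ≠ x → 0 ≤ b z := by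
    intro l hl1 hlM hLl
    rw [hLvl] at hLl
    rcases hLl with h0 | ⟨j, lt, hltmem, h0⟩
    · obtain ⟨hmem, hΔl, hpos⟩ := hFd_facts l h0
      refine ⟨⟨hΔl, hpos⟩, dth x l, hmem, dth_apply_self x l, fun z hz => ?_⟩
      rw [dth_apply_ne hz]
    · rw [Finset.mem_Icc] at hltmem
      obtain ⟨hmem, ⟨hind1, hind2⟩, hΔl⟩ :=
        hFm_facts j l lt hl1 hlM hltmem.1 hltmem.2 h0
      have hyx : nb x j ≠ x := nb_ne x j
      refine ⟨⟨hΔl, by omega⟩, mig x (nb x j) l lt, hmem, mig_apply_left hyx.symm l lt,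
        fun z hz => ?_⟩
      by_cases hzy : z = nb x j
      · subst hzy; rw [mig_apply_right hyx.symm]; positivity
      · rw [mig_apply_other hz hzy]
  -- facts about nn
  have hDj : ∀ j : Fin d × Bool,
      (((ξ (nb x j) - η (nb x j)).toNat : ℕ) : ℤ) = ξ (nb x j) - η (nb x j) :=
    fun j => Int.toNat_of_nonneg (by have := hle' (nb x j); omega)
  have hnn_le : ∀ l j, 1 ≤ l → l ≤ M → nn l j ≤ N := by
    intro l j hl1 hlM
    by_cases hTne : ((Finset.Icc 1 N).filter (fun lt => Fm (j, l, lt) ≠ 0)).Nonempty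
    · simp only [hnn]
      rw [dif_pos hTne]
      have hlt0 := Finset.max'_mem _ hTne
      rw [Finset.mem_filter, Finset.mem_Icc] at hlt0
      obtain ⟨⟨h1, h2⟩, h0⟩ := hlt0
      obtain ⟨-, ⟨-, hi2⟩, -⟩ := hFm_facts j l _ hl1 hlM h1 h2 h0
      have hy1 := (hη (nb x j)).1
      have := hDj j
      omega
    · simp only [hnn]
      rw [dif_neg hTne]
      split
      · have := hDj j
        have := (hξ (nb x j)).2
        have := (hη (nb x j)).1
        omega
      · omega
  have hnn_facts : ∀ l j jt, 1 ≤ l → l ≤ M → 1 ≤ jt → jt ≤ nn l j →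
      η (nb x j) + jt ≤ N ∧
      ∃ b ∈ D2, b x = -(l:ℤ) ∧ η (nb x j) + jt ≤ ξ (nb x j) + b (nb x j) ∧
        ∀ z, z ≠ x → z ≠ nb x j → 0 ≤ b z := by
    intro l j jt hl1 hlM hjt1 hjtn
    have hyx : nb x j ≠ x := nb_ne x j
    by_cases hTne : ((Finset.Icc 1 N).filter (fun lt => Fm (j, l, lt) ≠ 0)).Nonempty
    · have hnval : nn l j = ((Finset.Icc 1 N).filter (fun lt => Fm (j, l, lt) ≠ 0)).max' hTne
          + (ξ (nb x j) - η (nb x j)).toNat := by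
        simp only [hnn]; rw [dif_pos hTne]
      have hlt0 := Finset.max'_mem _ hTne
      rw [Finset.mem_filter, Finset.mem_Icc] at hlt0
      obtain ⟨⟨h1, h2⟩, h0⟩ := hlt0
      obtain ⟨hmem, ⟨-, hi2⟩, -⟩ := hFm_facts j l _ hl1 hlM h1 h2 h0
      rw [hnval] at hjtn
      have hcast := hDj j
      refine ⟨by omega, mig x (nb x j) l _, hmem, mig_apply_left hyx.symm _ _, ?_, ?_⟩
      · rw [mig_apply_right hyx.symm]
        omega
      · intro z hzx hzy
        rw [mig_apply_other hzx hzy]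
    · have hnval : nn l j = if dth x l ∈ D2 then (ξ (nb x j) - η (nb x j)).toNat else 0 := by
        simp only [hnn]; rw [dif_neg hTne]
      rw [hnval] at hjtn
      by_cases hdm : dth x l ∈ D2
      · rw [if_pos hdm] at hjtn
        have hcast := hDj j
        have := (hξ (nb x j)).2
        refine ⟨by omega, dth x l, hdm, dth_apply_self x l, ?_, ?_⟩
        · rw [dth_apply_ne hyx]
          omega
        · intro z hzx _
          rw [dth_apply_ne hzx]
      · rw [if_neg hdm] at hjtn
        omega
  -- constants for the 1/(2d) trick
  have h2d0 : (2 * (d : ℝ≥0∞)) ≠ 0 :=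
    mul_ne_zero (by norm_num) (Nat.cast_ne_zero.2 (by omega))
  have h2dtop : (2 * (d : ℝ≥0∞)) ≠ ⊤ :=
    ENNReal.mul_ne_top (by norm_num) (ENNReal.natCast_ne_top d)
  have hμsplit : ∀ a : ℝ≥0∞, ∑ _j : Fin d × Bool, a / (2 * (d : ℝ≥0∞)) = a := by
    intro a
    rw [Finset.sum_const, Finset.card_univ, Fintype.card_prod, Fintype.card_fin,
      Fintype.card_bool, nsmul_eq_mul]
    rw [show ((d * 2 : ℕ) : ℝ≥0∞) = 2 * (d : ℝ≥0∞) by push_cast; ring]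
    exact ENNReal.mul_div_cancel h2d0 h2dtop
  -- profiles at x
  have hr₀ : ∀ j', profile η x j' ∈ Set.Icc (0:ℤ) N := fun j' => hη _
  have hs₀ : ∀ j', profile ξ x j' ∈ Set.Icc (0:ℤ) N := fun j' => hξ _
  have hrs₀ : profile η x ≤ profile ξ x := fun j' => hle' _
  -- Step 2 : per level
  have step2 : ∀ l ∈ Finset.Icc 1 M,
      Fd l + ∑ j : Fin d × Bool, ∑ lt ∈ Finset.Icc 1 N, Fm (j, l, lt) ≤
      Gd l + ∑ j : Fin d × Bool, ∑ jt ∈ Finset.Icc 1 N, Gm (j, l, jt) := by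
    intro l hlmem
    rw [Finset.mem_Icc] at hlmem
    obtain ⟨hl1, hlM⟩ := hlmem
    by_cases hLl : Lvl l
    swap
    · have hFd0 : Fd l = 0 := by
        by_contra h0
        exact hLl (Or.inl h0)
      have hFm0 : ∀ j : Fin d × Bool, ∀ lt ∈ Finset.Icc 1 N, Fm (j, l, lt) = 0 := by
        intro j lt hlt
        by_contra h0
        exact hLl (Or.inr ⟨j, lt, hlt, h0⟩)
      rw [hFd0, zero_add]
      calc ∑ j : Fin d × Bool, ∑ lt ∈ Finset.Icc 1 N, Fm (j, l, lt) = 0 :=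
            Finset.sum_eq_zero fun j _ => Finset.sum_eq_zero fun lt hlt => hFm0 j lt hlt
        _ ≤ _ := zero_le
    · obtain ⟨⟨hΔl, hξxl⟩, b₀, hb₀D, hb₀x, hb₀pos⟩ := hLvl_wit l hl1 hlM hLl
      set i : ℕ := l - Δ with hi
      have hi1 : 1 ≤ i := by omega
      have hil : i ≤ l := by omega
      have hiM : i ≤ M := le_trans hil hlM
      have hcasti : (i:ℤ) = (l:ℤ) - (ξ x - η x) := by
        rw [hi]; omega
      have hGdval : Gd l = c1 η (dth x i) := by
        simp only [hGd]; rw [if_pos hLl]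
      set φB : ℝ≥0∞ := if l = 1 then
          ((ξ x).toNat : ℝ≥0∞) * (if ξ x ≤ NA then φA2 (profile ξ x) else φ2 (profile ξ x))
        else 0 with hφB
      have hFdle : Fd l ≤ φB + (if (N:ℤ) - M ≤ ξ x - l then μ2 l (profile ξ x) else 0) := by
        rcases eq_or_ne l 1 with rfl | hl2
        · refine le_trans (indicator_le_self' D2 (c2 ξ) (dth x 1)) ?_
          rw [rate_dth_one hc2]
          have hcondeq : ((N:ℤ) - M < ξ x) = ((N:ℤ) - M ≤ ξ x - 1) :=
            propext ⟨by omega, by omega⟩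
          simp only [hcondeq]
          simp only [hφB, if_pos rfl]
          push_cast
          exact le_rfl
        · have h2l : 2 ≤ l := by omega
          refine le_trans (indicator_le_self' D2 (c2 ξ) (dth x l)) ?_
          rw [rate_dth hc2 ξ x h2l hlM]
          simp only [hφB, if_neg hl2, zero_add]
          exact le_rfl
      have hkey : φB + (if (N:ℤ) - M ≤ ξ x - l then μ1 i (profile η x) else 0) ≤
          c1 η (dth x i) := by
        rcases eq_or_ne i 1 with hieq | hi2
        · rw [hieq, rate_dth_one hc1]
          have hcondeq : ((N:ℤ) - M < η x) = ((N:ℤ) - M ≤ ξ x - l) :=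
            propext ⟨by omega, by omega⟩
          simp only [← hcondeq]
          refine add_le_add ?_ le_rfl
          rcases eq_or_ne l 1 with rfl | hl2
          · have hξη : ξ x = η x := by omega
            simp only [hφB, if_pos rfl]
            rw [hξη]
            refine mul_le_mul_right ?_ _
            obtain ⟨hφ, hφA⟩ := ha (profile η x) (profile ξ x) hr₀ hs₀ hrs₀
            by_cases hNA : η x ≤ NA
            · rw [if_pos hNA, if_pos hNA]; exact hφA
            · rw [if_neg hNA, if_neg hNA]; exact hφ
          · simp only [hφB, if_neg hl2]
            exact zero_le
        · have h2i : 2 ≤ i := by omega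
          have hl2 : l ≠ 1 := by omega
          rw [rate_dth hc1 η x h2i hiM]
          have hcondeq : ((N:ℤ) - M ≤ η x - i) = ((N:ℤ) - M ≤ ξ x - l) :=
            propext ⟨by omega, by omega⟩
          simp only [← hcondeq]
          simp only [hφB, if_neg hl2, zero_add]
          exact le_rfl
      by_cases hind : (N:ℤ) - M ≤ ξ x - l
      · -- main case : use condition (c)
        have hcol : ∀ j : Fin d × Bool,
            ∑ lt ∈ Finset.Icc 1 N, Fm (j, l, lt) ≤
            ∑ jt ∈ Finset.Icc 1 (nn l j), lam2 l jt (profile ξ x) := by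
          intro j
          by_cases hTne : ((Finset.Icc 1 N).filter (fun lt => Fm (j, l, lt) ≠ 0)).Nonempty
          · have hnval : nn l j =
                ((Finset.Icc 1 N).filter (fun lt => Fm (j, l, lt) ≠ 0)).max' hTne
                  + (ξ (nb x j) - η (nb x j)).toNat := by
              simp only [hnn]; rw [dif_pos hTne]
            calc ∑ lt ∈ Finset.Icc 1 N, Fm (j, l, lt)
                = ∑ lt ∈ (Finset.Icc 1 N).filter (fun lt => Fm (j, l, lt) ≠ 0), Fm (j, l, lt) :=
                  (Finset.sum_filter_ne_zero _).symm
              _ ≤ ∑ lt ∈ (Finset.Icc 1 N).filter (fun lt => Fm (j, l, lt) ≠ 0),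
                    lam2 l lt (profile ξ x) := by
                  refine Finset.sum_le_sum fun lt hlt => ?_
                  rw [Finset.mem_filter, Finset.mem_Icc] at hlt
                  refine le_trans (indicator_le_self' D2 (c2 ξ) _) ?_
                  rw [rate_mig hc2 ξ (nbrZ_nb x j) hl1 hlM hlt.1.1 hlt.1.2]
                  split <;> simp
              _ ≤ ∑ jt ∈ Finset.Icc 1 (nn l j), lam2 l jt (profile ξ x) := by
                  refine Finset.sum_le_sum_of_subset_of_nonneg ?_ (fun _ _ _ => zero_le)
                  intro lt hlt
                  have hlt' := hlt
                  rw [Finset.mem_filter, Finset.mem_Icc] at hlt'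
                  rw [Finset.mem_Icc, hnval]
                  exact ⟨hlt'.1.1, le_trans (Finset.le_max' _ _ hlt) (Nat.le_add_right _ _)⟩
          · have hall : ∀ lt ∈ Finset.Icc 1 N, Fm (j, l, lt) = 0 := by
              intro lt hlt
              by_contra h0
              exact hTne ⟨lt, Finset.mem_filter.2 ⟨hlt, h0⟩⟩
            rw [Finset.sum_eq_zero hall]
            exact zero_le
        calc Fd l + ∑ j : Fin d × Bool, ∑ lt ∈ Finset.Icc 1 N, Fm (j, l, lt)
            ≤ (φB + μ2 l (profile ξ x)) +
              ∑ j : Fin d × Bool, ∑ jt ∈ Finset.Icc 1 (nn l j), lam2 l jt (profile ξ x) := by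
              refine add_le_add ?_ (Finset.sum_le_sum fun j _ => hcol j)
              rw [if_pos hind] at hFdle
              exact hFdle
          _ = φB + ∑ j : Fin d × Bool, (μ2 l (profile ξ x) / (2 * (d : ℝ≥0∞)) +
                ∑ jt ∈ Finset.Icc 1 (nn l j), lam2 l jt (profile ξ x)) := by
              rw [Finset.sum_add_distrib, hμsplit, add_assoc]
          _ ≤ φB + ∑ j : Fin d × Bool, (μ1 i (profile η x) / (2 * (d : ℝ≥0∞)) +
                ∑ jt ∈ Finset.Icc 1 (nn l j), lam1 i jt (profile η x)) := by
              refine add_le_add le_rfl (Finset.sum_le_sum fun j _ => ?_)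
              exact hcc (profile η x) (profile ξ x) hr₀ hs₀ hrs₀ (nn l j) i l
                (hnn_le l j hl1 hlM) hi1 hil hlM
          _ = (φB + μ1 i (profile η x)) +
              ∑ j : Fin d × Bool, ∑ jt ∈ Finset.Icc 1 (nn l j), lam1 i jt (profile η x) := by
              rw [Finset.sum_add_distrib, hμsplit, add_assoc]
          _ ≤ Gd l + ∑ j : Fin d × Bool, ∑ jt ∈ Finset.Icc 1 N, Gm (j, l, jt) := by
              refine add_le_add ?_ (Finset.sum_le_sum fun j _ => ?_)
              · rw [hGdval]
                rw [if_pos hind] at hkey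
                exact hkey
              · calc ∑ jt ∈ Finset.Icc 1 (nn l j), lam1 i jt (profile η x)
                    = ∑ jt ∈ Finset.Icc 1 (nn l j), Gm (j, l, jt) := by
                      refine Finset.sum_congr rfl fun jt hjt => ?_
                      rw [Finset.mem_Icc] at hjt
                      obtain ⟨hyN, -⟩ := hnn_facts l j jt hl1 hlM hjt.1 hjt.2
                      simp only [hGm]
                      rw [if_pos ⟨hLl, hjt.1, hjt.2⟩]
                      rw [rate_mig hc1 η (nbrZ_nb x j) hi1 hiM hjt.1
                        (le_trans hjt.2 (hnn_le l j hl1 hlM))]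
                      rw [if_pos ⟨by omega, by omega⟩]
                  _ ≤ ∑ jt ∈ Finset.Icc 1 N, Gm (j, l, jt) := by
                      refine Finset.sum_le_sum_of_subset_of_nonneg ?_
                        (fun _ _ _ => zero_le)
                      intro jt hjt
                      rw [Finset.mem_Icc] at hjt ⊢
                      exact ⟨hjt.1, le_trans hjt.2 (hnn_le l j hl1 hlM)⟩
      · -- degenerate case : all λ/μ terms vanish
        have hFm0 : ∀ j : Fin d × Bool, ∀ lt ∈ Finset.Icc 1 N, Fm (j, l, lt) = 0 := by
          intro j lt hlt
          rw [Finset.mem_Icc] at hlt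
          by_contra h0
          obtain ⟨-, ⟨h1, -⟩, -⟩ := hFm_facts j l lt hl1 hlM hlt.1 hlt.2 h0
          exact hind h1
        have hz : ∑ j : Fin d × Bool, ∑ lt ∈ Finset.Icc 1 N, Fm (j, l, lt) = 0 :=
          Finset.sum_eq_zero fun j _ => Finset.sum_eq_zero fun lt hlt => hFm0 j lt hlt
        rw [hz, add_zero]
        rw [if_neg hind, add_zero] at hFdle
        rw [if_neg hind, add_zero] at hkey
        calc Fd l ≤ φB := hFdle
          _ ≤ c1 η (dth x i) := hkey
          _ = Gd l := hGdval.symm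
          _ ≤ Gd l + _ := le_self_add
  -- membership facts for step 3
  have hGd_facts : ∀ l, 1 ≤ l → l ≤ M → Gd l ≠ 0 → Δ < l ∧ dth x (l - Δ) ∈ DA := by
    intro l hl1 hlM h0
    have hLl : Lvl l := by
      by_contra h
      simp only [hGd] at h0
      rw [if_neg h] at h0
      exact h0 rfl
    obtain ⟨⟨hΔl, hξxl⟩, b₀, hb₀D, hb₀x, hb₀pos⟩ := hLvl_wit l hl1 hlM hLl
    have hcasti : ((l - Δ : ℕ):ℤ) = (l:ℤ) - (ξ x - η x) := by omega
    refine ⟨hΔl, ?_, ?_, ?_⟩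
    · exact dth_mem_changeSet x (by omega)
    · refine applicable_dth ?_ hη
      have hxN := (hη x).2
      constructor
      · omega
      · omega
    · refine ⟨b₀, hb₀D, ?_⟩
      refine Pi.le_def.mpr fun z => ?_
      rw [app_apply, app_apply]
      by_cases hzx : z = x
      · subst hzx
        rw [dth_apply_self]
        omega
      · rw [dth_apply_ne hzx]
        have := hb₀pos z hzx
        have := hle' z
        omega
  set bM : (Fin d × Bool) × ℕ × ℕ → ((Fin d → ℤ) → ℤ) :=
    fun p => mig x (nb x p.1) (p.2.1 - Δ) p.2.2 with hbM
  have hGm_facts : ∀ p ∈ T, Gm p ≠ 0 → Δ < p.2.1 ∧ 1 ≤ p.2.2 ∧ bM p ∈ DA := by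
    intro p hpT h0
    obtain ⟨j, l, jt⟩ := p
    rw [hT] at hpT
    simp only [Finset.mem_product, Finset.mem_Icc] at hpT
    obtain ⟨-, ⟨hl1, hlM⟩, hjt1', hjtN⟩ := hpT
    simp only [hGm] at h0
    by_cases hcond : Lvl (j, l, jt).2.1 ∧ 1 ≤ (j, l, jt).2.2 ∧
        (j, l, jt).2.2 ≤ nn (j, l, jt).2.1 (j, l, jt).1
    swap
    · rw [if_neg hcond] at h0; exact absurd rfl h0
    obtain ⟨hLl, hjt1, hjtn⟩ := hcond
    obtain ⟨⟨hΔl, hξxl⟩, -⟩ := hLvl_wit l hl1 hlM hLl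
    obtain ⟨hyN, b, hbD, hbx, hby, hbz⟩ := hnn_facts l j jt hl1 hlM hjt1 hjtn
    have hyx : nb x j ≠ x := nb_ne x j
    have hcasti : ((l - Δ : ℕ):ℤ) = (l:ℤ) - (ξ x - η x) := by omega
    have hbMval : bM (j, l, jt) = mig x (nb x j) (l - Δ) jt := rfl
    refine ⟨hΔl, hjt1, ?_⟩
    show bM (j, l, jt) ∈ DA
    rw [hbMval]
    refine ⟨?_, ?_, ?_⟩
    · exact mig_out_mem_changeSet (nbrZ_nb x j) (by omega) hjt1
    · refine applicable_mig hyx.symm ?_ ?_ hη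
      · have hxN := (hη x).2
        constructor
        · omega
        · omega
      · have := (hη (nb x j)).1
        constructor
        · omega
        · omega
    · refine ⟨b, hbD, ?_⟩
      refine Pi.le_def.mpr fun z => ?_
      rw [app_apply, app_apply]
      by_cases hzx : z = x
      · subst hzx
        rw [mig_apply_left hyx.symm]
        omega
      · by_cases hzy : z = nb x j
        · subst hzy
          rw [mig_apply_right hyx.symm]
          omega
        · rw [mig_apply_other hzx hzy]
          have := hbz z hzx hzy
          have := hle' z
          omega
  -- Step 3
  have step3 : ∑ l ∈ Finset.Icc 1 M, Gd l + ∑ p ∈ T, Gm p ≤ ∑' a : DA, c1 η a.1 := by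
    set Td : Finset ℕ := (Finset.Icc 1 M).filter (fun l => Gd l ≠ 0) with hTd
    set Tm : Finset ((Fin d × Bool) × ℕ × ℕ) := T.filter (fun p => Gm p ≠ 0) with hTm
    set dM : ℕ → ((Fin d → ℤ) → ℤ) := fun l => dth x (l - Δ) with hdM
    have hTd_sub : ∀ l ∈ Td, (1 ≤ l ∧ l ≤ M) ∧ Gd l ≠ 0 := by
      intro l hl
      rw [hTd, Finset.mem_filter, Finset.mem_Icc] at hl
      exact hl
    have hTm_sub : ∀ p ∈ Tm, p ∈ T ∧ Gm p ≠ 0 := by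
      intro p hp
      rw [hTm, Finset.mem_filter] at hp
      exact hp
    have hinj_d : ∀ l ∈ Td, ∀ l' ∈ Td, dM l = dM l' → l = l' := by
      intro l hl l' hl' hh
      obtain ⟨⟨hl1, hlM⟩, h0⟩ := hTd_sub l hl
      obtain ⟨⟨hl1', hlM'⟩, h0'⟩ := hTd_sub l' hl'
      have hΔl := (hGd_facts l hl1 hlM h0).1
      have hΔl' := (hGd_facts l' hl1' hlM' h0').1
      have := dth_inj hh (by omega)
      omega
    have hinj_m : ∀ p ∈ Tm, ∀ q ∈ Tm, bM p = bM q → p = q := by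
      intro p hp q hq hpq
      obtain ⟨hpT, hp0⟩ := hTm_sub p hp
      obtain ⟨hqT, hq0⟩ := hTm_sub q hq
      obtain ⟨hpΔ, hp1, -⟩ := hGm_facts p hpT hp0
      obtain ⟨hqΔ, hq1, -⟩ := hGm_facts q hqT hq0
      obtain ⟨-, h2, h3, h4⟩ := mig_inj (Ne.symm (nb_ne x p.1)) (Ne.symm (nb_ne x q.1))
        (by omega) hp1 (by omega) hq1 hpq
      have hj := nb_injective x h2
      have hll : p.2.1 = q.2.1 := by omega
      exact Prod.ext hj (Prod.ext hll h4)
    have hdisj : Disjoint (Td.image dM) (Tm.image bM) := by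
      rw [Finset.disjoint_left]
      intro b hb hb'
      obtain ⟨l, hl, rfl⟩ := Finset.mem_image.1 hb
      obtain ⟨p, hp, hp2⟩ := Finset.mem_image.1 hb'
      obtain ⟨hpT, hp0⟩ := hTm_sub p hp
      obtain ⟨-, hp1, -⟩ := hGm_facts p hpT hp0
      exact mig_ne_dth (Ne.symm (nb_ne x p.1)) _ _ _ hp1 hp2
    have hGdval : ∀ l ∈ Td, Gd l = c1 η (dM l) := by
      intro l hl
      obtain ⟨-, h0⟩ := hTd_sub l hl
      have hLl : Lvl l := by
        by_contra h
        simp only [hGd] at h0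
        rw [if_neg h] at h0
        exact h0 rfl
      simp only [hGd, hdM]
      rw [if_pos hLl]
    have hGmval : ∀ p ∈ Tm, Gm p = c1 η (bM p) := by
      intro p hp
      obtain ⟨hpT, h0⟩ := hTm_sub p hp
      simp only [hGm] at h0 ⊢
      by_cases hcond : Lvl p.2.1 ∧ 1 ≤ p.2.2 ∧ p.2.2 ≤ nn p.2.1 p.1
      · rw [if_pos hcond]
      · rw [if_neg hcond] at h0
        exact absurd rfl h0
    calc ∑ l ∈ Finset.Icc 1 M, Gd l + ∑ p ∈ T, Gm p
        = ∑ l ∈ Td, Gd l + ∑ p ∈ Tm, Gm p := by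
          rw [hTd, hTm, Finset.sum_filter_ne_zero, Finset.sum_filter_ne_zero]
      _ = ∑ l ∈ Td, c1 η (dM l) + ∑ p ∈ Tm, c1 η (bM p) := by
          rw [Finset.sum_congr rfl hGdval, Finset.sum_congr rfl hGmval]
      _ = ∑ b ∈ Td.image dM, c1 η b + ∑ b ∈ Tm.image bM, c1 η b := by
          rw [Finset.sum_image hinj_d, Finset.sum_image hinj_m]
      _ = ∑ b ∈ Td.image dM ∪ Tm.image bM, c1 η b := (Finset.sum_union hdisj).symm
      _ ≤ ∑' a : DA, c1 η a.1 := by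
          refine sum_le_tsum_set (c1 η) DA _ ?_
          intro b hbmem
          rcases Finset.mem_union.1 hbmem with hb | hb
          · obtain ⟨l, hl, rfl⟩ := Finset.mem_image.1 hb
            obtain ⟨⟨hl1, hlM⟩, h0⟩ := hTd_sub l hl
            exact (hGd_facts l hl1 hlM h0).2
          · obtain ⟨p, hp, rfl⟩ := Finset.mem_image.1 hb
            obtain ⟨hpT, hp0⟩ := hTm_sub p hp
            exact (hGm_facts p hpT hp0).2.2
  -- assemble
  refine le_trans step1 (le_trans ?_ step3)
  have hre : ∀ G : (Fin d × Bool) × ℕ × ℕ → ℝ≥0∞,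
      ∑ p ∈ T, G p = ∑ l ∈ Finset.Icc 1 M, ∑ j : Fin d × Bool, ∑ lt ∈ Finset.Icc 1 N,
        G (j, l, lt) := by
    intro G
    rw [hT, Finset.sum_product]
    have hstep : ∀ j : Fin d × Bool, ∑ q ∈ Finset.Icc 1 M ×ˢ Finset.Icc 1 N, G (j, q)
        = ∑ l ∈ Finset.Icc 1 M, ∑ lt ∈ Finset.Icc 1 N, G (j, l, lt) := fun j =>
      Finset.sum_product _ _ _
    rw [Finset.sum_congr rfl (fun j _ => hstep j)]
    exact Finset.sum_comm
  rw [hre Fm, hre Gm, ← Finset.sum_add_distrib, ← Finset.sum_add_distrib]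
  exact Finset.sum_le_sum step2
end main2
end Aux

/-- under conditions (a), (b), (c) on two BDM parameter vectors, the
comparison conditions (C1) and (C2) hold at every site for every ordered pair of
configurations. -/
theorem bdm_comparison
    (d N NA M : ℕ) (hd : 1 ≤ d) (hNA1 : 1 ≤ NA) (hNAN : NA ≤ N) (hM1 : 1 ≤ M) (hMN : M ≤ N)
    (φ1 φA1 φ2 φA2 : ((Fin d × Bool) → ℤ) → ℝ≥0∞)
    (μ1 μ2 : ℕ → ((Fin d × Bool) → ℤ) → ℝ≥0∞)
    (lam1 lam2 : ℕ → ℕ → ((Fin d × Bool) → ℤ) → ℝ≥0∞)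
    (c1 c2 : ((Fin d → ℤ) → ℤ) → ((Fin d → ℤ) → ℤ) → ℝ≥0∞)
    (hc1 : IsBDMRate d N NA M φ1 φA1 μ1 lam1 c1)
    (hc2 : IsBDMRate d N NA M φ2 φA2 μ2 lam2 c2)
    (ha : ∀ r s : (Fin d × Bool) → ℤ, (∀ j, r j ∈ Set.Icc (0 : ℤ) N) →
        (∀ j, s j ∈ Set.Icc (0 : ℤ) N) → r ≤ s →
        φ2 s ≤ φ1 r ∧ φA2 s ≤ φA1 r)
    (hb : ∀ r s : (Fin d × Bool) → ℤ, (∀ j, r j ∈ Set.Icc (0 : ℤ) N) →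
        (∀ j, s j ∈ Set.Icc (0 : ℤ) N) → r ≤ s →
        ∀ m k j, 1 ≤ m → m ≤ M → 1 ≤ k → k ≤ j → j ≤ N →
        ∑ i ∈ Finset.Icc 1 m, lam1 i j r ≤ ∑ i ∈ Finset.Icc 1 m, lam2 i k s)
    (hc : ∀ r s : (Fin d × Bool) → ℤ, (∀ j, r j ∈ Set.Icc (0 : ℤ) N) →
        (∀ j, s j ∈ Set.Icc (0 : ℤ) N) → r ≤ s →
        ∀ n i l, n ≤ N → 1 ≤ i → i ≤ l → l ≤ M →
        μ2 l s / (2 * (d : ℝ≥0∞)) + ∑ j ∈ Finset.Icc 1 n, lam2 l j s ≤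
          μ1 i r / (2 * (d : ℝ≥0∞)) + ∑ j ∈ Finset.Icc 1 n, lam1 i j r) :
    ∀ (x : Fin d → ℤ) (η ξ : (Fin d → ℤ) → ℤ),
      (∀ z, η z ∈ Set.Icc (0 : ℤ) N) → (∀ z, ξ z ∈ Set.Icc (0 : ℤ) N) → η ≤ ξ →
      CondC1 (Set.Icc (0 : ℤ) N) (nbrZ d) x η ξ (c1 η) (c2 ξ) ∧
      CondC2 (Set.Icc (0 : ℤ) N) (nbrZ d) x η ξ (c1 η) (c2 ξ) := by
  intro x η ξ hη hξ hle
  exact ⟨Aux.condC1_main hMN hc1 hc2 hb x η ξ hη hξ hle,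
         Aux.condC2_main hd hMN hc1 hc2 ha hc x η ξ hη hξ hle⟩

end IPS
end

section
/- For every real p with 0 < p < 1, with q = 1 − p, and all integers m, j, k with 1 ≤ k ≤ j ≤ m: ∑_{i=j}^m C(i,j) p^j q^{i−j} ≤ ∑_{i=k}^m C(i,k) p^k q^{i−k}. (Equivalently, the binomial migration rates λ_{il} = λ·C(i,l)p^l q^{i−l}, λ > 0, satisfy ∑_{i=1}^m λ_{ij} ≤ ∑_{i=1}^m λ_{ik} for all 1 ≤ k ≤ j.) -/
private lemma binom_step (p : ℝ) (j m : ℕ) (hjm : j ≤ m) :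
    ∑ i ∈ Finset.Icc j m, (i.choose j : ℝ) * p ^ j * (1 - p) ^ (i - j)
      = (∑ i ∈ Finset.Icc (j+1) m,
          (i.choose (j+1) : ℝ) * p ^ (j+1) * (1 - p) ^ (i - (j+1)))
        + ((m+1).choose (j+1) : ℝ) * p ^ j * (1 - p) ^ (m - j) := by
  induction m, hjm using Nat.le_induction with
  | base =>
      simp [Finset.Icc_eq_empty_of_lt (Nat.lt_succ_self j)]
  | succ m hm ih =>
      rw [Finset.sum_Icc_succ_top (le_trans hm (Nat.le_succ m)),
        Finset.sum_Icc_succ_top (Nat.succ_le_succ hm), ih]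
      have h1 : m + 1 - j = (m - j) + 1 := by omega
      have h2 : m + 1 - (j + 1) = m - j := by omega
      have h3 : ((m+1+1).choose (j+1) : ℝ)
          = ((m+1).choose j : ℝ) + ((m+1).choose (j+1) : ℝ) := by
        rw [Nat.choose_succ_succ']; push_cast; ring
      rw [h1, h2, h3]
      ring

/-- the binomial migration rates satisfy the first attractiveness
condition: for `0 < p < 1` and `1 ≤ k ≤ j ≤ m`,
`∑_{i=j}^m C(i,j) p^j (1−p)^{i−j} ≤ ∑_{i=k}^m C(i,k) p^k (1−p)^{i−k}`. -/
theorem binomial_rates_first_condition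
    (p : ℝ) (hp0 : 0 < p) (hp1 : p < 1) (m j k : ℕ)
    (hk : 1 ≤ k) (hkj : k ≤ j) (hjm : j ≤ m) :
    ∑ i ∈ Finset.Icc j m, (i.choose j : ℝ) * p ^ j * (1 - p) ^ (i - j) ≤
      ∑ i ∈ Finset.Icc k m, (i.choose k : ℝ) * p ^ k * (1 - p) ^ (i - k) := by
  have hq : (0:ℝ) ≤ 1 - p := by linarith
  have mono : ∀ n : ℕ, n ≤ m →
      ∑ i ∈ Finset.Icc (n+1) m, (i.choose (n+1) : ℝ) * p ^ (n+1) * (1 - p) ^ (i - (n+1))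
        ≤ ∑ i ∈ Finset.Icc n m, (i.choose n : ℝ) * p ^ n * (1 - p) ^ (i - n) := by
    intro n hn
    rw [binom_step p n m hn]
    have : (0:ℝ) ≤ ((m+1).choose (n+1) : ℝ) * p ^ n * (1 - p) ^ (m - n) := by
      positivity
    linarith
  clear hk
  induction j, hkj using Nat.le_induction with
  | base => exact le_refl _
  | succ n hn ih =>
      exact le_trans (mono n (by omega)) (ih (by omega))
end

section
/- Assume conditions (GSC1) and (GSC2) hold. Then for every nonempty finite set K of integers with min K ≥ b + 1, writing l = min K − b − 1 (so l ≥ 0): ∑_{k∈K} Γ¹(k) ≤ ∑_{l'=l+1}^{a + max K} Γ²(l'). -/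
lemma tail_split (f : ℕ → ℝ) (hf : Summable f) (m M : ℕ) (h : m ≤ M + 1) :
    ∑' j : ℕ, f (m + j) = ∑ k ∈ Finset.Icc m M, f k + ∑' j : ℕ, f (M + 1 + j) := by
  have hg : Summable (fun n : ℕ => f (m + (n + (M + 1 - m)))) := by
    have : (fun n : ℕ => f (m + (n + (M + 1 - m)))) = fun n => f (n + (M + 1)) := by
      funext n; congr 1; omega
    rw [this]; exact (summable_nat_add_iff (M + 1)).2 hf
  have key := Summable.sum_add_tsum_nat_add' (f := fun j : ℕ => f (m + j)) (k := M + 1 - m) hg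
  have e1 : ∑ i ∈ Finset.range (M + 1 - m), f (m + i) = ∑ k ∈ Finset.Icc m M, f k := by
    rw [← Finset.Ico_add_one_right_eq_Icc, Finset.sum_Ico_eq_sum_range]
  have e2 : (∑' i : ℕ, f (m + (i + (M + 1 - m)))) = ∑' i : ℕ, f (M + 1 + i) := by
    apply tsum_congr; intro i; congr 1; omega
  rw [e1, e2] at key
  linarith [key]

/-- under the Gobron–Saada conditions (GSC1) and (GSC2), for every
nonempty finite set `K` of integers with `min K ≥ b + 1`, writing `l = min K − b − 1`,
one has `∑_{k∈K} Γ¹(k) ≤ ∑_{l'=l+1}^{a + max K} Γ²(l')`. -/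
theorem gsc_set_rate_bound
    (Γ1 Γ2 : ℕ → ℝ) (h1 : ∀ k, 0 ≤ Γ1 k) (h2 : ∀ k, 0 ≤ Γ2 k)
    (hs1 : Summable Γ1) (hs2 : Summable Γ2) (a b : ℕ)
    (hgsc1 : ∀ l : ℕ, ∑' j : ℕ, Γ1 (b + l + 1 + j) ≤ ∑' j : ℕ, Γ2 (l + 1 + j))
    (hgsc2 : ∀ k : ℕ, ∑' j : ℕ, Γ2 (a + k + 1 + j) ≤ ∑' j : ℕ, Γ1 (k + 1 + j)) :
    ∀ (K : Finset ℕ) (hK : K.Nonempty), b + 1 ≤ K.min' hK →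
      ∑ k ∈ K, Γ1 k ≤ ∑ l' ∈ Finset.Icc (K.min' hK - b) (a + K.max' hK), Γ2 l' := by
  intro K hK hb
  set m := K.min' hK with hm
  set M := K.max' hK with hM
  have hmM : m ≤ M := K.min'_le M (K.max'_mem hK)
  -- step 1: sum over K bounded by sum over Icc m M
  have step1 : ∑ k ∈ K, Γ1 k ≤ ∑ k ∈ Finset.Icc m M, Γ1 k := by
    apply Finset.sum_le_sum_of_subset_of_nonneg
    · intro k hk
      exact Finset.mem_Icc.2 ⟨K.min'_le k hk, K.le_max' k hk⟩
    · intro k _ _; exact h1 k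
  -- tail splits
  have t1 := tail_split Γ1 hs1 m M (by omega)
  have t2 := tail_split Γ2 hs2 (m - b) (a + M) (by omega)
  -- GSC1 at l = m - b - 1
  have g1 : ∑' j : ℕ, Γ1 (m + j) ≤ ∑' j : ℕ, Γ2 (m - b + j) := by
    have := hgsc1 (m - b - 1)
    have e1 : (fun j : ℕ => Γ1 (b + (m - b - 1) + 1 + j)) = fun j => Γ1 (m + j) := by
      funext j; congr 1; omega
    have e2 : (fun j : ℕ => Γ2 ((m - b - 1) + 1 + j)) = fun j => Γ2 (m - b + j) := by
      funext j; congr 1; omega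
    rw [e1, e2] at this; exact this
  -- GSC2 at k = M
  have g2 : ∑' j : ℕ, Γ2 (a + M + 1 + j) ≤ ∑' j : ℕ, Γ1 (M + 1 + j) := hgsc2 M
  linarith [step1]
end
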